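/- arXiv:1404.5545 — 2 statements merged into one kernel-verified Lean document; each statement's English description precedes it below -/
import Mathlib

section
/- Fix p ≥ 1 and f : [n]^d → ℝ, and let f_ext = f ∘ Φ : [N]^d → ℝ. Then: (i) for every g ∈ P(B), with g_ext = g ∘ Φ, one has Σ_{x∈[n]^d} μ_D(x)·|f(x) − g(x)|^p = (1/N^d)·Σ_{v∈[N]^d} |f_ext(v) − g_ext(v)|^p; and (ii) the infimum over g ∈ P(B) of Σ_{x∈[n]^d} μ_D(x)·|f(x) − g(x)|^p equals the infimum over all h : [N]^d → ℝ satisfying h(v) − h(w) ≤ m_ext(v,w) for all v,w ∈ [N]^d of (1/N^d)·Σ_{v∈[N]^d} |f_ext(v) − h(v)|^p, where m_ext(v,w) = m(Φ(v), Φ(w)). -/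
open Finset
open scoped Classical

/-- Membership of a point in the hypergrid `[n]^d = {1,…,n}^d`. -/
def inGrid (n d : ℕ) (x : Fin d → ℕ) : Prop := ∀ r : Fin d, 1 ≤ x r ∧ x r ≤ n

/-- The hypergrid `[n]^d = {1,…,n}^d` as a finite set of points. -/
def gridF (n d : ℕ) : Finset (Fin d → ℕ) :=
  Finset.Icc (fun _ => 1) (fun _ => n)

/-- The quasimetric associated to a bounding family `(l, u)`. -/
def qm (d : ℕ) (l u : Fin d → ℕ → ℝ) (x y : Fin d → ℕ) : ℝ :=
  ∑ r : Fin d, ((∑ t ∈ Finset.Ico (y r) (x r), u r t) - ∑ t ∈ Finset.Ico (x r) (y r), l r t)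

/-- `g` belongs to the bounded-derivative property `P(B)` for the bounding family `(l,u)`. -/
def memP (n d : ℕ) (l u : Fin d → ℕ → ℝ) (g : (Fin d → ℕ) → ℝ) : Prop :=
  ∀ r : Fin d, ∀ x : Fin d → ℕ, inGrid n d x → x r + 1 ≤ n →
    l r (x r) ≤ g (Function.update x r (x r + 1)) - g x ∧
    g (Function.update x r (x r + 1)) - g x ≤ u r (x r)

/-- `phi q t` is the unique `ℓ` with `Σ_{j<ℓ} q j < t ≤ Σ_{j≤ℓ} q j`. -/
noncomputable def phi (q : ℕ → ℕ) (t : ℕ) : ℕ :=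
  sInf {ℓ : ℕ | t ≤ ∑ j ∈ Finset.Icc 1 ℓ, q j}

/-- The map `Φ : [N]^d → [n]^d`. -/
noncomputable def Phi (d : ℕ) (q : Fin d → ℕ → ℕ) (v : Fin d → ℕ) : Fin d → ℕ :=
  fun r => phi (q r) (v r)

/-- The extended quasimetric `m_ext(v,w) = m(Φ(v),Φ(w))` on `[N]^d`. -/
noncomputable def mext (d : ℕ) (l u : Fin d → ℕ → ℝ) (q : Fin d → ℕ → ℕ)
    (v w : Fin d → ℕ) : ℝ :=
  qm d l u (Phi d q v) (Phi d q w)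

section Aux

lemma S_mono (q : ℕ → ℕ) : Monotone (fun ℓ => ∑ j ∈ Finset.Icc 1 ℓ, q j) := by
  intro a b hab
  exact Finset.sum_le_sum_of_subset (Finset.Icc_subset_Icc_right hab)

lemma phi_eq {q : ℕ → ℕ} {t ℓ : ℕ} (hℓ : 1 ≤ ℓ)
    (h1 : ∑ j ∈ Finset.Icc 1 (ℓ-1), q j < t) (h2 : t ≤ ∑ j ∈ Finset.Icc 1 ℓ, q j) :
    phi q t = ℓ := by
  refine le_antisymm (Nat.sInf_le h2) ?_
  refine le_csInf ⟨ℓ, h2⟩ ?_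
  intro m hm
  by_contra hc
  push_neg at hc
  have hm' : m ≤ ℓ - 1 := by omega
  have := S_mono q hm'
  simp only [Set.mem_setOf_eq] at hm
  simp only at this
  omega

lemma phi_spec {n : ℕ} {q : ℕ → ℕ} {t : ℕ} (ht : 1 ≤ t)
    (hne : t ≤ ∑ j ∈ Finset.Icc 1 n, q j) :
    1 ≤ phi q t ∧ phi q t ≤ n ∧
    (∑ j ∈ Finset.Icc 1 (phi q t - 1), q j < t) ∧
    t ≤ ∑ j ∈ Finset.Icc 1 (phi q t), q j := by
  have hnem : phi q t ∈ {ℓ : ℕ | t ≤ ∑ j ∈ Finset.Icc 1 ℓ, q j} := Nat.sInf_mem ⟨n, hne⟩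
  simp only [Set.mem_setOf_eq] at hnem
  have hle : phi q t ≤ n := Nat.sInf_le hne
  have h1 : 1 ≤ phi q t := by
    rcases Nat.eq_zero_or_pos (phi q t) with h | h
    · exfalso
      rw [h] at hnem
      simp at hnem
      omega
    · omega
  have hpred : ¬ (t ≤ ∑ j ∈ Finset.Icc 1 (phi q t - 1), q j) := by
    intro hcon
    have h2 := Nat.sInf_le (s := {ℓ : ℕ | t ≤ ∑ j ∈ Finset.Icc 1 ℓ, q j}) hcon
    have h3 : phi q t ≤ phi q t - 1 := h2
    omega
  exact ⟨h1, hle, by omega, hnem⟩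

end Aux

section Aux2

lemma mem_gridF {n d : ℕ} {x : Fin d → ℕ} : x ∈ gridF n d ↔ inGrid n d x := by
  simp [gridF, inGrid, Finset.mem_Icc, Pi.le_def, forall_and]

lemma S_step {q : ℕ → ℕ} {ℓ : ℕ} (h : 1 ≤ ℓ) :
    ∑ j ∈ Finset.Icc 1 ℓ, q j = ∑ j ∈ Finset.Icc 1 (ℓ-1), q j + q ℓ := by
  obtain ⟨m, rfl⟩ : ∃ m, ℓ = m + 1 := ⟨ℓ - 1, by omega⟩
  rw [Finset.sum_Icc_succ_top (by omega)]
  simp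

lemma fiber1 {n N : ℕ} {q : ℕ → ℕ} (hsum : ∑ j ∈ Finset.Icc 1 n, q j = N)
    {ℓ : ℕ} (h1 : 1 ≤ ℓ) (h2 : ℓ ≤ n) :
    (Finset.Icc 1 N).filter (fun t => phi q t = ℓ)
      = Finset.Ioc (∑ j ∈ Finset.Icc 1 (ℓ-1), q j) (∑ j ∈ Finset.Icc 1 ℓ, q j) := by
  ext t
  simp only [Finset.mem_filter, Finset.mem_Icc, Finset.mem_Ioc]
  constructor
  · rintro ⟨⟨ht1, ht2⟩, rfl⟩
    have := phi_spec (n := n) ht1 (hsum ▸ ht2)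
    exact ⟨this.2.2.1, this.2.2.2⟩
  · rintro ⟨hlt, hle⟩
    have hSn : ∑ j ∈ Finset.Icc 1 ℓ, q j ≤ N := by
      rw [← hsum]; exact S_mono q h2
    refine ⟨⟨by omega, by omega⟩, phi_eq h1 hlt hle⟩

lemma fiber1_card {n N : ℕ} {q : ℕ → ℕ} (hsum : ∑ j ∈ Finset.Icc 1 n, q j = N)
    {ℓ : ℕ} (h1 : 1 ≤ ℓ) (h2 : ℓ ≤ n) :
    ((Finset.Icc 1 N).filter (fun t => phi q t = ℓ)).card = q ℓ := by
  rw [fiber1 hsum h1 h2, Nat.card_Ioc, S_step h1]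
  omega

lemma phi_mem_grid {n N : ℕ} {q : ℕ → ℕ} (hsum : ∑ j ∈ Finset.Icc 1 n, q j = N)
    {t : ℕ} (ht1 : 1 ≤ t) (ht2 : t ≤ N) : 1 ≤ phi q t ∧ phi q t ≤ n := by
  have := phi_spec (n := n) ht1 (hsum ▸ ht2)
  exact ⟨this.1, this.2.1⟩

lemma fiber_card {n d N : ℕ} {q : Fin d → ℕ → ℕ}
    (hsum : ∀ r, ∑ j ∈ Finset.Icc 1 n, q r j = N)
    {x : Fin d → ℕ} (hx : inGrid n d x) :
    ((gridF N d).filter (fun v => Phi d q v = x)).card = ∏ r : Fin d, q r (x r) := by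
  have : (gridF N d).filter (fun v => Phi d q v = x)
      = Fintype.piFinset (fun r => (Finset.Icc 1 N).filter (fun t => phi (q r) t = x r)) := by
    ext v
    simp only [Finset.mem_filter, Fintype.mem_piFinset, mem_gridF, inGrid, Phi, funext_iff, Finset.mem_Icc]
    exact ⟨fun h a => ⟨⟨(h.1 a).1, (h.1 a).2⟩, h.2 a⟩, fun h => ⟨fun a => ⟨(h a).1.1, (h a).1.2⟩, fun a => (h a).2⟩⟩
  rw [this, Fintype.card_piFinset]
  exact Finset.prod_congr rfl (fun r _ => fiber1_card (hsum r) (hx r).1 (hx r).2)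

lemma sum_pull {n d N : ℕ} (hN : 1 ≤ N) {q : Fin d → ℕ → ℕ}
    (hsum : ∀ r, ∑ j ∈ Finset.Icc 1 n, q r j = N)
    (F : (Fin d → ℕ) → ℝ) :
    ∑ x ∈ gridF n d, (∏ r : Fin d, ((q r (x r) : ℝ) / N)) * F x
      = (1 / (N : ℝ) ^ d) * ∑ v ∈ gridF N d, F (Phi d q v) := by
  have hmaps : ∀ v ∈ gridF N d, Phi d q v ∈ gridF n d := by
    intro v hv
    rw [mem_gridF] at hv ⊢
    intro r
    exact phi_mem_grid (hsum r) (hv r).1 (hv r).2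
  rw [← Finset.sum_fiberwise_of_maps_to hmaps (fun v => F (Phi d q v))]
  rw [Finset.mul_sum]
  refine Finset.sum_congr rfl (fun x hx => ?_)
  have hcongr : ∀ v ∈ (gridF N d).filter (fun v => Phi d q v = x),
      F (Phi d q v) = F x := by
    intro v hv
    rw [(Finset.mem_filter.mp hv).2]
  rw [Finset.sum_congr rfl hcongr, Finset.sum_const,
    fiber_card hsum (mem_gridF.mp hx)]
  have hNpos : (0:ℝ) < (N:ℝ) := by exact_mod_cast hN
  rw [nsmul_eq_mul]
  push_cast
  rw [Finset.prod_div_distrib, Finset.prod_const]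
  simp only [Finset.card_univ, Fintype.card_fin]
  field_simp

end Aux2

section Aux3

variable {n d : ℕ} {l u : Fin d → ℕ → ℝ} {g : (Fin d → ℕ) → ℝ}

lemma step_up (hg : memP n d l u g) {z : Fin d → ℕ} (hz : inGrid n d z) (r : Fin d) :
    ∀ b, z r ≤ b → b ≤ n →
      (∑ t ∈ Finset.Ico (z r) b, l r t ≤ g (Function.update z r b) - g z) ∧
      (g (Function.update z r b) - g z ≤ ∑ t ∈ Finset.Ico (z r) b, u r t) := by
  intro b
  induction b with
  | zero => intro h1 h2; have : z r = 0 := by omega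
            exact absurd this (by have := (hz r).1; omega)
  | succ b ih =>
    intro h1 h2
    rcases Nat.lt_or_ge b (z r) with hlt | hge
    · -- z r = b + 1
      have hzb : z r = b + 1 := by omega
      rw [← hzb, Function.update_eq_self]
      simp
    · have hb : b ≤ n := by omega
      obtain ⟨ihl, ihu⟩ := ih hge hb
      -- point at which we apply memP
      set x := Function.update z r b with hx
      have hxg : inGrid n d x := by
        intro r'
        rcases eq_or_ne r' r with rfl | hne
        · rw [hx, Function.update_self]; exact ⟨by have := (hz r').1; omega, hb⟩
        · rw [hx, Function.update_of_ne hne]; exact hz r'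
      have hxr : x r = b := by rw [hx, Function.update_self]
      have hmem := hg r x hxg (by omega)
      have hupd : Function.update x r (x r + 1) = Function.update z r (b + 1) := by
        rw [hxr, hx, Function.update_idem]
      rw [hupd, hxr] at hmem
      rw [Finset.sum_Ico_succ_top hge, Finset.sum_Ico_succ_top hge]
      constructor
      · linarith [hmem.1]
      · linarith [hmem.2]

lemma oneD (hg : memP n d l u g) {z : Fin d → ℕ} (hz : inGrid n d z) (r : Fin d)
    {b : ℕ} (hb1 : 1 ≤ b) (hb2 : b ≤ n) :
    g z - g (Function.update z r b) ≤
      (∑ t ∈ Finset.Ico b (z r), u r t) - ∑ t ∈ Finset.Ico (z r) b, l r t := by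
  rcases le_or_gt (z r) b with hle | hlt
  · have := (step_up hg hz r b hle hb2).1
    have hempty : Finset.Ico b (z r) = ∅ := Finset.Ico_eq_empty (by omega)
    rw [hempty]
    simp only [Finset.sum_empty]
    linarith
  · -- b < z r : go up from z' = update z r b to z r
    set z' := Function.update z r b with hz'
    have hz'g : inGrid n d z' := by
      intro r'
      rcases eq_or_ne r' r with rfl | hne
      · rw [hz', Function.update_self]; exact ⟨hb1, hb2⟩
      · rw [hz', Function.update_of_ne hne]; exact hz r'
    have hz'r : z' r = b := by rw [hz', Function.update_self]
    have := (step_up hg hz'g r (z r) (by omega) (hz r).2).2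
    rw [hz'r] at this
    have hupd : Function.update z' r (z r) = z := by
      rw [hz', Function.update_idem, Function.update_eq_self]
    rw [hupd] at this
    have hempty : Finset.Ico (z r) b = ∅ := Finset.Ico_eq_empty (by omega)
    rw [hempty]
    simp only [Finset.sum_empty]
    linarith

lemma blend_bound (hg : memP n d l u g) {x y : Fin d → ℕ}
    (hx : inGrid n d x) (hy : inGrid n d y) (S : Finset (Fin d)) :
    g x - g (fun r => if r ∈ S then y r else x r) ≤
      ∑ r ∈ S, ((∑ t ∈ Finset.Ico (y r) (x r), u r t) - ∑ t ∈ Finset.Ico (x r) (y r), l r t) := by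
  classical
  induction S using Finset.induction with
  | empty => simp
  | @insert r S hrS ih =>
    set zS : Fin d → ℕ := fun r' => if r' ∈ S then y r' else x r' with hzS
    have hzSg : inGrid n d zS := by
      intro r'
      rw [hzS]
      dsimp only
      split
      · exact hy r'
      · exact hx r'
    have hzSr : zS r = x r := by rw [hzS]; simp [hrS]
    have hnew : (fun r' => if r' ∈ insert r S then y r' else x r')
        = Function.update zS r (y r) := by
      funext r'
      rcases eq_or_ne r' r with rfl | hne
      · simp [Function.update_self]
      · simp [Function.update_of_ne hne, hzS, hne]
    rw [hnew, Finset.sum_insert hrS]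
    have h1 := ih
    have h2 := oneD hg hzSg r (hy r).1 (hy r).2
    rw [hzSr] at h2
    linarith

lemma sub_le_qm (hg : memP n d l u g) {x y : Fin d → ℕ}
    (hx : inGrid n d x) (hy : inGrid n d y) :
    g x - g y ≤ qm d l u x y := by
  have := blend_bound hg hx hy Finset.univ
  simp only [Finset.mem_univ, if_true] at this
  exact this

end Aux3

section Aux4

variable {n d N : ℕ} {l u : Fin d → ℕ → ℝ}

lemma qm_self (x : Fin d → ℕ) : qm d l u x x = 0 := by
  simp [qm]

lemma qm_update_left (x : Fin d → ℕ) (r : Fin d) (b : ℕ) :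
    qm d l u (Function.update x r b) x
      = (∑ t ∈ Finset.Ico (x r) b, u r t) - ∑ t ∈ Finset.Ico b (x r), l r t := by
  rw [qm]
  rw [Fintype.sum_eq_single r]
  · rw [Function.update_self]
  · intro r' hne
    rw [Function.update_of_ne hne]
    simp

lemma qm_update_right (x : Fin d → ℕ) (r : Fin d) (b : ℕ) :
    qm d l u x (Function.update x r b)
      = (∑ t ∈ Finset.Ico b (x r), u r t) - ∑ t ∈ Finset.Ico (x r) b, l r t := by
  rw [qm]
  rw [Fintype.sum_eq_single r]
  · rw [Function.update_self]
  · intro r' hne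
    rw [Function.update_of_ne hne]
    simp

lemma qm_succ_left (x : Fin d → ℕ) (r : Fin d) :
    qm d l u (Function.update x r (x r + 1)) x = u r (x r) := by
  rw [qm_update_left]
  rw [show Finset.Ico (x r + 1) (x r) = ∅ from Finset.Ico_eq_empty (by omega), Nat.Ico_succ_singleton]
  simp

lemma qm_succ_right (x : Fin d → ℕ) (r : Fin d) :
    qm d l u x (Function.update x r (x r + 1)) = - l r (x r) := by
  rw [qm_update_right]
  rw [show Finset.Ico (x r + 1) (x r) = ∅ from Finset.Ico_eq_empty (by omega), Nat.Ico_succ_singleton]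
  simp

/-- The canonical section of `Φ`. -/
noncomputable def sec (d : ℕ) (q : Fin d → ℕ → ℕ) (x : Fin d → ℕ) : Fin d → ℕ :=
  fun r => ∑ j ∈ Finset.Icc 1 (x r), q r j

lemma sec_mem {q : Fin d → ℕ → ℕ}
    (hpos : ∀ r : Fin d, ∀ j : ℕ, 1 ≤ j → j ≤ n → 0 < q r j)
    (hsum : ∀ r, ∑ j ∈ Finset.Icc 1 n, q r j = N)
    {x : Fin d → ℕ} (hx : inGrid n d x) : inGrid N d (sec d q x) := by
  intro r
  constructor
  · have h1 : 0 < q r 1 := hpos r 1 le_rfl (by have := (hx r).2; have := (hx r).1; omega)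
    have h2 : ∑ j ∈ Finset.Icc 1 1, q r j ≤ ∑ j ∈ Finset.Icc 1 (x r), q r j :=
      S_mono (q r) (hx r).1
    simp only [Finset.Icc_self, Finset.sum_singleton] at h2
    rw [sec]; omega
  · rw [sec]
    calc ∑ j ∈ Finset.Icc 1 (x r), q r j ≤ ∑ j ∈ Finset.Icc 1 n, q r j :=
          S_mono (q r) (hx r).2
      _ = N := hsum r

lemma Phi_sec {q : Fin d → ℕ → ℕ}
    (hpos : ∀ r : Fin d, ∀ j : ℕ, 1 ≤ j → j ≤ n → 0 < q r j)
    {x : Fin d → ℕ} (hx : inGrid n d x) : Phi d q (sec d q x) = x := by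
  funext r
  rw [Phi, sec]
  have h1 : 1 ≤ x r := (hx r).1
  have h2 : x r ≤ n := (hx r).2
  refine phi_eq h1 ?_ le_rfl
  rw [S_step h1]
  have := hpos r (x r) h1 h2
  omega

end Aux4

/-- the bloated-hypergrid reduction preserves `L_p`-distances:
(i) for every `g ∈ P(B)`, the `μ_D`-weighted `p`-th power distance of `f` to `g`
equals the uniform one of `f_ext = f∘Φ` to `g_ext = g∘Φ`; (ii) the infimum over
`g ∈ P(B)` equals the infimum over all `h` on `[N]^d` with
`h(v) − h(w) ≤ m_ext(v,w)`. -/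
theorem stmt7 (n d N : ℕ) (hn : 2 ≤ n) (hd : 1 ≤ d) (hN : 1 ≤ N)
    (l u : Fin d → ℕ → ℝ)
    (hlu : ∀ r : Fin d, ∀ t : ℕ, 1 ≤ t → t + 1 ≤ n → l r t < u r t)
    (q : Fin d → ℕ → ℕ)
    (hpos : ∀ r : Fin d, ∀ j : ℕ, 1 ≤ j → j ≤ n → 0 < q r j)
    (hsum : ∀ r : Fin d, ∑ j ∈ Finset.Icc 1 n, q r j = N)
    (p : ℝ) (hp : 1 ≤ p)
    (f : (Fin d → ℕ) → ℝ) :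
    (∀ g : (Fin d → ℕ) → ℝ, memP n d l u g →
      ∑ x ∈ gridF n d, (∏ r : Fin d, ((q r (x r) : ℝ) / N)) * |f x - g x| ^ p
        = (1 / (N : ℝ) ^ d) *
            ∑ v ∈ gridF N d, |f (Phi d q v) - g (Phi d q v)| ^ p) ∧
    sInf {s : ℝ | ∃ g : (Fin d → ℕ) → ℝ, memP n d l u g ∧
        s = ∑ x ∈ gridF n d, (∏ r : Fin d, ((q r (x r) : ℝ) / N)) * |f x - g x| ^ p}
      = sInf {s : ℝ | ∃ h : (Fin d → ℕ) → ℝ,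
          (∀ v ∈ gridF N d, ∀ w ∈ gridF N d, h v - h w ≤ mext d l u q v w) ∧
          s = (1 / (N : ℝ) ^ d) * ∑ v ∈ gridF N d, |f (Phi d q v) - h v| ^ p} := by
  have hpart1 : ∀ g : (Fin d → ℕ) → ℝ, memP n d l u g →
      ∑ x ∈ gridF n d, (∏ r : Fin d, ((q r (x r) : ℝ) / N)) * |f x - g x| ^ p
        = (1 / (N : ℝ) ^ d) *
            ∑ v ∈ gridF N d, |f (Phi d q v) - g (Phi d q v)| ^ p :=
    fun g _ => sum_pull hN hsum (fun y => |f y - g y| ^ p)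
  refine ⟨hpart1, ?_⟩
  have hmapgrid : ∀ v ∈ gridF N d, inGrid n d (Phi d q v) := by
    intro v hv r
    exact phi_mem_grid (hsum r) ((mem_gridF.mp hv) r).1 ((mem_gridF.mp hv) r).2
  congr 1
  ext s
  simp only [Set.mem_setOf_eq]
  constructor
  · rintro ⟨g, hg, rfl⟩
    refine ⟨fun v => g (Phi d q v), ?_, ?_⟩
    · intro v hv w hw
      exact sub_le_qm hg (hmapgrid v hv) (hmapgrid w hw)
    · exact hpart1 g hg
  · rintro ⟨h, hlip, rfl⟩
    have hconst : ∀ v ∈ gridF N d, ∀ w ∈ gridF N d, Phi d q v = Phi d q w → h v = h w := by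
      intro v hv w hw hvw
      have h1 := hlip v hv w hw
      have h2 := hlip w hw v hv
      rw [mext, hvw, qm_self] at h1
      rw [mext, ← hvw, qm_self] at h2
      linarith
    set g : (Fin d → ℕ) → ℝ := fun x => h (sec d q x) with hgdef
    have hgP : memP n d l u g := by
      intro r x hx hxr
      set x' := Function.update x r (x r + 1) with hx'
      have hx'g : inGrid n d x' := by
        intro r'
        rcases eq_or_ne r' r with rfl | hne
        · rw [hx', Function.update_self]
          exact ⟨by have := (hx r').1; omega, hxr⟩
        · rw [hx', Function.update_of_ne hne]; exact hx r'
      have hsx := sec_mem hpos hsum hx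
      have hsx' := sec_mem hpos hsum hx'g
      have e1 := hlip (sec d q x') (mem_gridF.mpr hsx') (sec d q x) (mem_gridF.mpr hsx)
      have e2 := hlip (sec d q x) (mem_gridF.mpr hsx) (sec d q x') (mem_gridF.mpr hsx')
      rw [mext, Phi_sec hpos hx'g, Phi_sec hpos hx] at e1
      rw [mext, Phi_sec hpos hx, Phi_sec hpos hx'g] at e2
      rw [hx', qm_succ_left] at e1
      rw [hx', qm_succ_right] at e2
      constructor
      · simp only [hgdef]
        rw [hx']
        linarith
      · simp only [hgdef]
        rw [hx']
        linarith
    refine ⟨g, hgP, ?_⟩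
    rw [sum_pull hN hsum (fun y => |f y - g y| ^ p)]
    congr 1
    refine Finset.sum_congr rfl (fun v hv => ?_)
    have hgv : g (Phi d q v) = h v := by
      have hPg : inGrid n d (Phi d q v) := hmapgrid v hv
      have hsec := sec_mem hpos hsum hPg
      exact hconst _ (mem_gridF.mpr hsec) v hv (Phi_sec hpos hPg)
    rw [hgv]
end

section
/- For every f : [n]^d → ℝ, the L1-distance of f to P(B) equals the maximum weight of a matching in the violation graph of f: inf_{g ∈ P(B)} Σ_{x∈[n]^d} |f(x) − g(x)| = max over matchings M of G_f of Σ_{{x,y}∈M} vs_f(x,y). -/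
open Finset

/-- The violation score of a pair `(x,y)` for the function `f`. -/
def vs (d : ℕ) (l u : Fin d → ℕ → ℝ) (f : (Fin d → ℕ) → ℝ) (x y : Fin d → ℕ) : ℝ :=
  max (f x - f y - qm d l u x y) (f y - f x - qm d l u y x)

/-- A matching of the violation graph `G_f`: a finite set of violated pairs of
grid points in which each point of the hypergrid occurs at most once. -/
def IsMatching (n d : ℕ) (l u : Fin d → ℕ → ℝ) (f : (Fin d → ℕ) → ℝ)
    (M : Finset ((Fin d → ℕ) × (Fin d → ℕ))) : Prop :=
  (∀ p ∈ M, inGrid n d p.1 ∧ inGrid n d p.2 ∧ p.1 ≠ p.2 ∧ 0 < vs d l u f p.1 p.2) ∧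
  (∀ p ∈ M, ∀ p' ∈ M, p ≠ p' →
    p.1 ≠ p'.1 ∧ p.1 ≠ p'.2 ∧ p.2 ≠ p'.1 ∧ p.2 ≠ p'.2)

namespace Stmt9Aux

open Finset

/-! ### Abstract flow machinery on a finite type -/

variable {V : Type*} [Fintype V] [DecidableEq V]

/-- Divergence (net outflow) of an integer flow. -/
def dvg (φ : V → V → ℕ) (x : V) : ℤ := (∑ y, (φ x y : ℤ)) - ∑ y, (φ y x : ℤ)

def addArc (φ : V → V → ℕ) (a b : V) : V → V → ℕ :=
  fun p q => if p = a ∧ q = b then φ p q + 1 else φ p q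

def subArc (φ : V → V → ℕ) (a b : V) : V → V → ℕ :=
  fun p q => if p = a ∧ q = b then φ p q - 1 else φ p q

lemma sum_indic (a b x : V) :
    (∑ y : V, if x = a ∧ y = b then (1:ℤ) else 0) = if x = a then 1 else 0 := by
  by_cases h : x = a <;> simp [h]

lemma dvg_addArc (φ : V → V → ℕ) (a b : V) (hab : a ≠ b) (x : V) :
    dvg (addArc φ a b) x = dvg φ x + (if x = a then 1 else 0) - (if x = b then 1 else 0) := by
  unfold dvg addArc
  have h1 : (∑ y, ((if x = a ∧ y = b then φ x y + 1 else φ x y : ℕ) : ℤ))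
      = (∑ y, (φ x y : ℤ)) + (if x = a then 1 else 0) := by
    rw [← sum_indic a b x, ← Finset.sum_add_distrib]
    apply Finset.sum_congr rfl
    intro y _
    by_cases h : x = a ∧ y = b <;> simp [h]
  have h2 : (∑ y, ((if y = a ∧ x = b then φ y x + 1 else φ y x : ℕ) : ℤ))
      = (∑ y, (φ y x : ℤ)) + (if x = b then 1 else 0) := by
    have : (∑ y : V, if x = b ∧ y = a then (1:ℤ) else 0) = if x = b then 1 else 0 :=
      sum_indic b a x
    rw [← this, ← Finset.sum_add_distrib]
    apply Finset.sum_congr rfl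
    intro y _
    by_cases h : y = a ∧ x = b
    · simp [h, h.1, h.2, and_comm]
    · have : ¬ (x = b ∧ y = a) := fun hc => h ⟨hc.2, hc.1⟩
      simp [h, this]
  rw [h1, h2]; ring

lemma dvg_subArc (φ : V → V → ℕ) (a b : V) (hab : a ≠ b) (h1 : 1 ≤ φ a b) (x : V) :
    dvg (subArc φ a b) x = dvg φ x - (if x = a then 1 else 0) + (if x = b then 1 else 0) := by
  have key : φ = addArc (subArc φ a b) a b := by
    funext p q
    unfold addArc subArc
    by_cases h : p = a ∧ q = b
    · simp [h]; omega
    · simp [h]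
  have := dvg_addArc (subArc φ a b) a b hab x
  rw [← key] at this
  omega

/-- Cut identity: the sum of divergences over `C` equals outflow minus inflow across `C`. -/
lemma cut_sum (φ : V → V → ℕ) (C : Finset V) :
    ∑ x ∈ C, dvg φ x
      = (∑ x ∈ C, ∑ y ∈ Cᶜ, (φ x y : ℤ)) - ∑ x ∈ C, ∑ y ∈ Cᶜ, (φ y x : ℤ) := by
  unfold dvg
  rw [Finset.sum_sub_distrib]
  have e1 : ∑ x ∈ C, ∑ y, (φ x y : ℤ)
      = (∑ x ∈ C, ∑ y ∈ C, (φ x y : ℤ)) + ∑ x ∈ C, ∑ y ∈ Cᶜ, (φ x y : ℤ) := by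
    rw [← Finset.sum_add_distrib]
    apply Finset.sum_congr rfl
    intro x _
    rw [Finset.sum_add_sum_compl]
  have e2 : ∑ x ∈ C, ∑ y, (φ y x : ℤ)
      = (∑ x ∈ C, ∑ y ∈ C, (φ y x : ℤ)) + ∑ x ∈ C, ∑ y ∈ Cᶜ, (φ y x : ℤ) := by
    rw [← Finset.sum_add_distrib]
    apply Finset.sum_congr rfl
    intro x _
    rw [Finset.sum_add_sum_compl]
  rw [e1, e2]
  have : (∑ x ∈ C, ∑ y ∈ C, (φ x y : ℤ)) = ∑ x ∈ C, ∑ y ∈ C, (φ y x : ℤ) := Finset.sum_comm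
  rw [this]; ring

lemma sum_dvg_univ (φ : V → V → ℕ) : ∑ x, dvg φ x = 0 := by
  have := cut_sum φ (Finset.univ : Finset V)
  simpa using this


/-- From reflexive-transitive reachability extract a duplicate-free chain. -/
lemma exists_nodup_chain (r : V → V → Prop) (a b : V) (h : Relation.ReflTransGen r a b) :
    ∃ L : List V, (a :: L).Chain' r ∧ (a :: L).getLast? = some b ∧ (a :: L).Nodup := by
  induction h using Relation.ReflTransGen.head_induction_on with
  | refl => exact ⟨[], List.isChain_singleton _, by simp, by simp⟩
  | head hac _ ih =>
    rename_i a' c _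
    obtain ⟨L, hch, hlast, hnd⟩ := ih
    by_cases hmem : a' ∈ c :: L
    · obtain ⟨s, t, hst⟩ := List.append_of_mem hmem
      refine ⟨t, ?_, ?_, ?_⟩
      · exact hch.suffix ⟨s, hst.symm⟩
      · rw [← hlast, hst, List.getLast?_append_cons]
      · have : (a' :: t).Sublist (c :: L) := hst ▸ (List.sublist_append_right s _)
        exact hnd.sublist this
    · refine ⟨c :: L, ?_, ?_, ?_⟩
      · exact List.isChain_cons_cons.mpr ⟨hac, hch⟩
      · rw [← hlast]; simp [List.getLast?_cons_cons]
      · exact List.nodup_cons.mpr ⟨hmem, hnd⟩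

/-- Augment a unit of flow along a residual path. -/
lemma augment (Arc : V → V → Prop) (φ : V → V → ℕ) :
    ∀ (L : List V) (a b : V),
    (a :: L).Chain' (fun p q => Arc p q ∨ 0 < φ q p) → (a :: L).Nodup →
    (a :: L).getLast? = some b →
    ∃ φ' : V → V → ℕ, (∀ p q, 0 < φ' p q → 0 < φ p q ∨ Arc p q) ∧
      (∀ p q, φ' p q ≠ φ p q → p ∈ a :: L ∧ q ∈ a :: L) ∧
      (∀ x, dvg φ' x = dvg φ x + (if x = a then 1 else 0) - (if x = b then 1 else 0)) := by
  intro L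
  induction L with
  | nil =>
    intro a b _ _ hlast
    have hab : b = a := by simpa using hlast.symm
    refine ⟨φ, fun p q h => Or.inl h, fun p q h => absurd rfl h, fun x => ?_⟩
    subst hab; ring
  | cons c L' ih =>
    intro a b hch hnd hlast
    have hrel : Arc a c ∨ 0 < φ c a := (List.isChain_cons_cons.mp hch).1
    have hch' : (c :: L').Chain' (fun p q => Arc p q ∨ 0 < φ q p) := (List.isChain_cons_cons.mp hch).2
    have hnd' : (c :: L').Nodup := hnd.of_cons
    have hamem : a ∉ c :: L' := (List.nodup_cons.mp hnd).1
    have hlast' : (c :: L').getLast? = some b := by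
      rwa [List.getLast?_cons_cons] at hlast
    obtain ⟨φ'', hsupp, hmod, hdvg⟩ := ih c b hch' hnd' hlast'
    have hac : a ≠ c := fun h => hamem (h ▸ List.mem_cons_self (a := a) (l := L'))
    rcases hrel with hArc | hback
    · refine ⟨addArc φ'' a c, ?_, ?_, ?_⟩
      · intro p q hpos
        unfold addArc at hpos
        by_cases h : p = a ∧ q = c
        · exact Or.inr (h.1 ▸ h.2 ▸ hArc)
        · rw [if_neg h] at hpos; exact hsupp p q hpos
      · intro p q hne
        unfold addArc at hne
        by_cases h : p = a ∧ q = c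
        · exact ⟨h.1 ▸ List.mem_cons_self, h.2 ▸ List.mem_cons_of_mem _ (List.mem_cons_self)⟩
        · rw [if_neg h] at hne
          obtain ⟨h1, h2⟩ := hmod p q hne
          exact ⟨List.mem_cons_of_mem _ h1, List.mem_cons_of_mem _ h2⟩
      · intro x
        rw [dvg_addArc φ'' a c hac x, hdvg x]; ring
    · have hφ''ca : φ'' c a = φ c a := by
        by_contra h
        exact hamem (hmod c a h).2
      have h1 : 1 ≤ φ'' c a := by rw [hφ''ca]; omega
      refine ⟨subArc φ'' c a, ?_, ?_, ?_⟩
      · intro p q hpos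
        unfold subArc at hpos
        by_cases h : p = c ∧ q = a
        · rw [if_pos h] at hpos
          exact hsupp p q (by omega)
        · rw [if_neg h] at hpos; exact hsupp p q hpos
      · intro p q hne
        unfold subArc at hne
        by_cases h : p = c ∧ q = a
        · exact ⟨h.1 ▸ List.mem_cons_of_mem _ (List.mem_cons_self), h.2 ▸ List.mem_cons_self⟩
        · rw [if_neg h] at hne
          obtain ⟨hm1, hm2⟩ := hmod p q hne
          exact ⟨List.mem_cons_of_mem _ hm1, List.mem_cons_of_mem _ hm2⟩
      · intro x
        rw [dvg_subArc φ'' c a (Ne.symm hac) h1 x, hdvg x]; ring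

def Arcs (m : V → V → ℝ) (g : V → ℝ) (a b : V) : Prop := a ≠ b ∧ g a - g b = m a b

def Feas (m : V → V → ℝ) (f g : V → ℝ) (φ : V → V → ℕ) : Prop :=
  (∀ a b, 0 < φ a b → Arcs m g a b) ∧
  ∀ x, (-1 ≤ dvg φ x ∧ dvg φ x ≤ 1) ∧ (g x < f x → 0 ≤ dvg φ x) ∧ (f x < g x → dvg φ x ≤ 0)

noncomputable def score (f g : V → ℝ) (φ : V → V → ℕ) : ℤ :=
  ∑ x, (if g x < f x then dvg φ x else if f x < g x then - dvg φ x else 0)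

lemma deficiency (m : V → V → ℝ) (f g : V → ℝ)
    (hg : ∀ x y, g x - g y ≤ m x y)
    (hopt : ∀ g' : V → ℝ, (∀ x y, g' x - g' y ≤ m x y) → ∑ x, |f x - g x| ≤ ∑ x, |f x - g' x|)
    (φ : V → V → ℕ) (hφ : Feas m f g φ)
    (hmax : ∀ ψ, Feas m f g ψ → score f g ψ ≤ score f g φ)
    (v0 : V) (hv0 : g v0 < f v0) : dvg φ v0 = 1 := by
  classical
  by_contra hne
  have hv0dvg : dvg φ v0 = 0 := by
    have h1 := (hφ.2 v0).1.2
    have h2 := (hφ.2 v0).2.1 hv0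
    omega
  set res : V → V → Prop := fun p q => Arcs m g p q ∨ 0 < φ q p with hres
  set C : Finset V := univ.filter (fun w => Relation.ReflTransGen res v0 w) with hC
  have hv0C : v0 ∈ C := by
    rw [hC, mem_filter]; exact ⟨mem_univ _, Relation.ReflTransGen.refl⟩
  have hclosed : ∀ x ∈ C, ∀ y, res x y → y ∈ C := by
    intro x hx y hxy
    rw [hC, mem_filter] at hx ⊢
    exact ⟨mem_univ _, hx.2.tail hxy⟩
  by_cases hcase : ∃ w ∈ C, (f w < g w ∧ dvg φ w = 0) ∨ (¬ g w < f w ∧ ¬ f w < g w ∧ 0 ≤ dvg φ w)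
  · -- augmenting case
    obtain ⟨w, hwC, habs⟩ := hcase
    have hwP : ¬ g w < f w := by
      rcases habs with ⟨h1, _⟩ | ⟨h1, _, _⟩
      · exact fun hc => absurd h1 (lt_asymm hc)
      · exact h1
    have hwv0 : w ≠ v0 := fun h => hwP (h ▸ hv0)
    have hreach : Relation.ReflTransGen res v0 w := by
      rw [hC, mem_filter] at hwC; exact hwC.2
    obtain ⟨L, hch, hlast, hnd⟩ := exists_nodup_chain res v0 w hreach
    obtain ⟨φ', hsupp', hmod', hdvg'⟩ := augment (Arcs m g) φ L v0 w hch hnd hlast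
    have hdvg'x : ∀ x, x ≠ v0 → x ≠ w → dvg φ' x = dvg φ x := by
      intro x h1 h2
      rw [hdvg' x, if_neg h1, if_neg h2]; ring
    have hdvg'v0 : dvg φ' v0 = 1 := by
      rw [hdvg' v0, if_pos rfl, if_neg (Ne.symm hwv0), hv0dvg]; ring
    have hdvg'w : dvg φ' w = dvg φ w - 1 := by
      rw [hdvg' w, if_neg hwv0, if_pos rfl]; ring
    have hwlb : 0 ≤ dvg φ w := by
      rcases habs with ⟨_, h2⟩ | ⟨_, _, h2⟩
      · omega
      · exact h2
    have hFeas' : Feas m f g φ' := by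
      constructor
      · intro a b hpos
        rcases hsupp' a b hpos with h | h
        · exact hφ.1 a b h
        · exact h
      · intro x
        by_cases hx1 : x = v0
        · subst hx1
          rw [hdvg'v0]
          refine ⟨⟨by norm_num, le_refl 1⟩, fun _ => by norm_num, fun hc => absurd hv0 (lt_asymm hc)⟩
        by_cases hx2 : x = w
        · subst hx2
          rw [hdvg'w]
          have hub := (hφ.2 x).1.2
          refine ⟨⟨by omega, by omega⟩, fun hc => absurd hc hwP, fun hc => ?_⟩
          have := (hφ.2 x).2.2 hc
          omega
        · rw [hdvg'x x hx1 hx2]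
          exact hφ.2 x
    have hscore : score f g φ < score f g φ' := by
      have key : score f g φ' - score f g φ
          = ∑ x, ((if g x < f x then dvg φ' x else if f x < g x then - dvg φ' x else 0)
              - (if g x < f x then dvg φ x else if f x < g x then - dvg φ x else 0)) := by
        rw [Finset.sum_sub_distrib]; rfl
      have vanish : ∀ x ∈ (univ : Finset V), x ∉ ({v0, w} : Finset V) →
          ((if g x < f x then dvg φ' x else if f x < g x then - dvg φ' x else 0)
              - (if g x < f x then dvg φ x else if f x < g x then - dvg φ x else 0)) = 0 := by
        intro x _ hx
        simp only [mem_insert, mem_singleton] at hx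
        push_neg at hx
        rw [hdvg'x x hx.1 hx.2]; ring
      have hsum : score f g φ' - score f g φ
          = ∑ x ∈ ({v0, w} : Finset V),
              ((if g x < f x then dvg φ' x else if f x < g x then - dvg φ' x else 0)
              - (if g x < f x then dvg φ x else if f x < g x then - dvg φ x else 0)) := by
        rw [key, ← Finset.sum_subset (Finset.subset_univ ({v0, w} : Finset V))]
        intro x hx hnx
        exact vanish x hx hnx
      rw [Finset.sum_pair (Ne.symm hwv0)] at hsum
      have term_v0 : (if g v0 < f v0 then dvg φ' v0 else if f v0 < g v0 then - dvg φ' v0 else 0)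
          - (if g v0 < f v0 then dvg φ v0 else if f v0 < g v0 then - dvg φ v0 else 0) = 1 := by
        rw [if_pos hv0, if_pos hv0, hdvg'v0, hv0dvg]; ring
      have term_w : 0 ≤ (if g w < f w then dvg φ' w else if f w < g w then - dvg φ' w else 0)
          - (if g w < f w then dvg φ w else if f w < g w then - dvg φ w else 0) := by
        rcases habs with ⟨h1, h2⟩ | ⟨h1, h2, _⟩
        · rw [if_neg hwP, if_neg hwP, if_pos h1, if_pos h1, hdvg'w, h2]; norm_num
        · rw [if_neg h1, if_neg h1, if_neg h2, if_neg h2]; norm_num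
      omega
    exact absurd (hmax φ' hFeas') (not_le.mpr hscore)
  · -- improving-direction case
    have hNval : ∀ w ∈ C, ¬ g w < f w → dvg φ w = -1 := by
      intro w hwC hwP
      have h : ¬ ((f w < g w ∧ dvg φ w = 0) ∨ (¬ g w < f w ∧ ¬ f w < g w ∧ 0 ≤ dvg φ w)) :=
        fun hc => hcase ⟨w, hwC, hc⟩
      by_cases hN : f w < g w
      · have h1 : dvg φ w ≠ 0 := fun hc => h (Or.inl ⟨hN, hc⟩)
        have h2 := (hφ.2 w).2.2 hN
        have h3 := (hφ.2 w).1.1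
        omega
      · have h1 : ¬ 0 ≤ dvg φ w := fun hc => h (Or.inr ⟨hwP, hN, hc⟩)
        have h3 := (hφ.2 w).1.1
        omega
    -- cut: sum of divergences over C is zero
    have hcross1 : ∀ x ∈ C, ∀ y ∈ Cᶜ, φ x y = 0 := by
      intro x hx y hy
      by_contra hpos
      have harc := hφ.1 x y (Nat.pos_of_ne_zero hpos)
      have : y ∈ C := hclosed x hx y (Or.inl harc)
      rw [mem_compl] at hy; exact hy this
    have hcross2 : ∀ x ∈ C, ∀ y ∈ Cᶜ, φ y x = 0 := by
      intro x hx y hy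
      by_contra hpos
      have : y ∈ C := hclosed x hx y (Or.inr (Nat.pos_of_ne_zero hpos))
      rw [mem_compl] at hy; exact hy this
    have hsumC : ∑ x ∈ C, dvg φ x = 0 := by
      rw [cut_sum φ C]
      have e1 : ∑ x ∈ C, ∑ y ∈ Cᶜ, (φ x y : ℤ) = 0 :=
        Finset.sum_eq_zero (fun x hx => Finset.sum_eq_zero (fun y hy => by
          rw [hcross1 x hx y hy]; norm_num))
      have e2 : ∑ x ∈ C, ∑ y ∈ Cᶜ, (φ y x : ℤ) = 0 :=
        Finset.sum_eq_zero (fun x hx => Finset.sum_eq_zero (fun y hy => by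
          rw [hcross2 x hx y hy]; norm_num))
      rw [e1, e2]; ring
    set Pc : Finset V := C.filter (fun x => g x < f x) with hPc
    set Nc : Finset V := C.filter (fun x => ¬ g x < f x) with hNc
    have hsplit : ∑ x ∈ Pc, dvg φ x + ∑ x ∈ Nc, dvg φ x = 0 := by
      rw [hPc, hNc, Finset.sum_filter_add_sum_filter_not]; exact hsumC
    have hNcsum : ∑ x ∈ Nc, dvg φ x = - (Nc.card : ℤ) := by
      have h1 : ∑ x ∈ Nc, dvg φ x = ∑ _x ∈ Nc, (-1 : ℤ) :=
        Finset.sum_congr rfl (fun x hx => by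
          rw [hNc, mem_filter] at hx
          exact hNval x hx.1 hx.2)
      rw [h1]; simp
    have hv0Pc : v0 ∈ Pc := by rw [hPc, mem_filter]; exact ⟨hv0C, hv0⟩
    have hPcsum : ∑ x ∈ Pc, dvg φ x ≤ (Pc.card : ℤ) - 1 := by
      rw [← Finset.sum_erase_add Pc _ hv0Pc, hv0dvg, add_zero]
      calc ∑ x ∈ Pc.erase v0, dvg φ x ≤ ∑ _x ∈ Pc.erase v0, (1 : ℤ) :=
            Finset.sum_le_sum (fun x _ => (hφ.2 x).1.2)
        _ = ((Pc.erase v0).card : ℤ) := by simp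
        _ = (Pc.card : ℤ) - 1 := by
            rw [Finset.card_erase_of_mem hv0Pc]
            have : 1 ≤ Pc.card := Finset.card_pos.mpr ⟨v0, hv0Pc⟩
            omega
    have hcard : (Nc.card : ℤ) ≤ (Pc.card : ℤ) - 1 := by omega
    -- build the improving direction
    set S : Finset ℝ :=
      ((C ×ˢ Cᶜ).image (fun p => m p.1 p.2 - (g p.1 - g p.2)))
        ∪ (Pc.image (fun x => f x - g x)) ∪ {1} with hS
    have h1S : (1:ℝ) ∈ S := by rw [hS]; simp
    have hSne : S.Nonempty := ⟨1, h1S⟩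
    set t : ℝ := S.min' hSne with ht
    have hSpos : ∀ s ∈ S, 0 < s := by
      intro s hs
      rw [hS] at hs
      simp only [mem_union, mem_image, mem_singleton] at hs
      rcases hs with (⟨p, hp, rfl⟩ | ⟨x, hx, rfl⟩) | rfl
      · have hp1 : p.1 ∈ C := (Finset.mem_product.mp hp).1
        have hp2 : p.2 ∈ Cᶜ := (Finset.mem_product.mp hp).2
        have hxy : p.1 ≠ p.2 := by
          intro h
          exact (mem_compl.mp hp2) (h ▸ hp1)
        have hnarc : ¬ Arcs m g p.1 p.2 :=
          fun harc => (mem_compl.mp hp2) (hclosed _ hp1 _ (Or.inl harc))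
        have hle := hg p.1 p.2
        rcases lt_or_eq_of_le hle with h | h
        · linarith
        · exact absurd ⟨hxy, h⟩ hnarc
      · rw [hPc, mem_filter] at hx
        linarith [hx.2]
      · norm_num
    have htpos : 0 < t := hSpos _ (S.min'_mem hSne)
    have htle : ∀ s ∈ S, t ≤ s := fun s hs => Finset.min'_le S s hs
    set g' : V → ℝ := fun x => if x ∈ C then g x + t else g x with hgd
    have hLip : ∀ x y, g' x - g' y ≤ m x y := by
      intro x y
      rw [hgd]
      by_cases hx : x ∈ C <;> by_cases hy : y ∈ C
      · simp only [if_pos hx, if_pos hy]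
        linarith [hg x y]
      · simp only [if_pos hx, if_neg hy]
        have hmem : (m x y - (g x - g y)) ∈ S := by
          rw [hS]
          apply mem_union_left
          apply mem_union_left
          exact Finset.mem_image.mpr
            ⟨(x,y), Finset.mem_product.mpr ⟨hx, mem_compl.mpr hy⟩, rfl⟩
        have := htle _ hmem
        linarith
      · simp only [if_neg hx, if_pos hy]
        linarith [hg x y, htpos]
      · simp only [if_neg hx, if_neg hy]
        exact hg x y
    have hcost : ∑ x, |f x - g' x| = ∑ x, |f x - g x| + t * ((Nc.card : ℝ) - (Pc.card : ℝ)) := by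
      have hsplitU : ∀ (h : V → ℝ), ∑ x, h x = ∑ x ∈ C, h x + ∑ x ∈ Cᶜ, h x :=
        fun h => (Finset.sum_add_sum_compl C h).symm
      rw [hsplitU (fun x => |f x - g' x|), hsplitU (fun x => |f x - g x|)]
      have hout : ∑ x ∈ Cᶜ, |f x - g' x| = ∑ x ∈ Cᶜ, |f x - g x| :=
        Finset.sum_congr rfl (fun x hx => by rw [hgd]; simp only [if_neg (mem_compl.mp hx)])
      have hsplitC : ∀ (h : V → ℝ), ∑ x ∈ C, h x = ∑ x ∈ Pc, h x + ∑ x ∈ Nc, h x := by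
        intro h
        rw [hPc, hNc, Finset.sum_filter_add_sum_filter_not]
      rw [hout, hsplitC (fun x => |f x - g' x|), hsplitC (fun x => |f x - g x|)]
      have hPterm : ∑ x ∈ Pc, |f x - g' x| = (∑ x ∈ Pc, |f x - g x|) - t * Pc.card := by
        have hcong : ∀ x ∈ Pc, |f x - g' x| = |f x - g x| - t := by
          intro x hx
          rw [hPc, mem_filter] at hx
          have hgap : t ≤ f x - g x := by
            apply htle
            rw [hS]
            apply mem_union_left
            apply mem_union_right
            exact Finset.mem_image.mpr ⟨x, by rw [hPc, mem_filter]; exact hx, rfl⟩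
          rw [hgd]
          simp only [if_pos hx.1]
          rw [abs_of_nonneg (by linarith), abs_of_nonneg (by linarith [hx.2])]
          ring
        rw [Finset.sum_congr rfl hcong, Finset.sum_sub_distrib]
        simp [mul_comm]
      have hNterm : ∑ x ∈ Nc, |f x - g' x| = (∑ x ∈ Nc, |f x - g x|) + t * Nc.card := by
        have hcong : ∀ x ∈ Nc, |f x - g' x| = |f x - g x| + t := by
          intro x hx
          rw [hNc, mem_filter] at hx
          have hfg : f x ≤ g x := not_lt.mp hx.2
          rw [hgd]
          simp only [if_pos hx.1]
          rw [abs_of_nonpos (by linarith), abs_of_nonpos (by linarith)]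
          ring
        rw [Finset.sum_congr rfl hcong, Finset.sum_add_distrib]
        simp [mul_comm]
      rw [hPterm, hNterm]
      ring
    have hltcard : (Nc.card : ℝ) - Pc.card ≤ -1 := by
      have : ((Nc.card : ℤ) : ℝ) ≤ ((Pc.card : ℤ) : ℝ) - 1 := by
        have h' : (Nc.card : ℤ) ≤ (Pc.card : ℤ) - 1 := hcard
        exact_mod_cast (by exact_mod_cast h' : ((Nc.card : ℤ) : ℝ) ≤ (((Pc.card : ℤ) - 1 : ℤ) : ℝ))
      push_cast at this ⊢
      linarith
    have hlt : ∑ x, |f x - g' x| < ∑ x, |f x - g x| := by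
      rw [hcost]
      nlinarith [htpos]
    exact absurd (hopt g' hLip) (not_le.mpr hlt)

lemma dvg_swap (φ : V → V → ℕ) (x : V) : dvg (fun p q => φ q p) x = - dvg φ x := by
  unfold dvg; ring

lemma Feas_swap (m m' : V → V → ℝ) (f f' g g' : V → ℝ) (φ : V → V → ℕ)
    (hm : ∀ a b, m' a b = m b a) (hf : ∀ x, f' x = - f x) (hg : ∀ x, g' x = - g x)
    (h : Feas m f g φ) : Feas m' f' g' (fun p q => φ q p) := by
  constructor
  · intro a b hpos
    obtain ⟨hne, heq⟩ := h.1 b a hpos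
    refine ⟨hne.symm, ?_⟩
    rw [hg a, hg b, hm a b]
    linarith
  · intro x
    rw [dvg_swap]
    obtain ⟨⟨h1, h2⟩, h3, h4⟩ := h.2 x
    refine ⟨⟨by omega, by omega⟩, fun hc => ?_, fun hc => ?_⟩
    · rw [hg x, hf x] at hc
      have := h4 (by linarith)
      omega
    · rw [hg x, hf x] at hc
      have := h3 (by linarith)
      omega

lemma score_swap (f g f' g' : V → ℝ) (hf : ∀ x, f' x = - f x) (hg : ∀ x, g' x = - g x)
    (φ : V → V → ℕ) : score f' g' (fun p q => φ q p) = score f g φ := by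
  unfold score
  apply Finset.sum_congr rfl
  intro x _
  rw [dvg_swap, hf x, hg x]
  rcases lt_trichotomy (f x) (g x) with h | h | h
  · rw [if_pos (by linarith : -g x < -f x), if_neg (by linarith), if_pos h]
  · rw [if_neg (by linarith), if_neg (by linarith), if_neg (by linarith), if_neg (by linarith)]
  · rw [if_neg (by linarith), if_pos (by linarith : -f x < -g x), if_pos (by linarith)]
    ring

lemma exists_max_flow (m : V → V → ℝ) (f g : V → ℝ)
    (hφbd : ∀ φ, Feas m f g φ → score f g φ ≤ (Fintype.card V : ℤ)) :
    ∃ φ, Feas m f g φ ∧ ∀ ψ, Feas m f g ψ → score f g ψ ≤ score f g φ := by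
  have h0 : Feas m f g (fun _ _ => 0) := by
    constructor
    · intro a b hpos; simp at hpos
    · intro x
      have hz : dvg (fun _ _ => (0:ℕ)) x = 0 := by unfold dvg; simp
      rw [hz]
      exact ⟨⟨by norm_num, by norm_num⟩, fun _ => le_refl 0, fun _ => le_refl 0⟩
  obtain ⟨s, ⟨φ, hφ, hs⟩, hmax⟩ := Int.exists_greatest_of_bdd
    (P := fun s => ∃ φ, Feas m f g φ ∧ score f g φ = s)
    ⟨(Fintype.card V : ℤ), fun z hz => by
      obtain ⟨φ, hφ, hs⟩ := hz
      exact hs ▸ hφbd φ hφ⟩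
    ⟨score f g (fun _ _ => 0), (fun _ _ => 0), h0, rfl⟩
  exact ⟨φ, hφ, fun ψ hψ => hs ▸ hmax _ ⟨ψ, hψ, rfl⟩⟩

lemma score_bound (m : V → V → ℝ) (f g : V → ℝ) (φ : V → V → ℕ) (hφ : Feas m f g φ) :
    score f g φ ≤ (Fintype.card V : ℤ) := by
  unfold score
  calc ∑ x, (if g x < f x then dvg φ x else if f x < g x then - dvg φ x else 0)
      ≤ ∑ _x : V, (1:ℤ) := by
        apply Finset.sum_le_sum
        intro x _
        obtain ⟨⟨h1, h2⟩, _, _⟩ := hφ.2 x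
        split_ifs <;> omega
    _ = (Fintype.card V : ℤ) := by simp

/-- A score-maximal feasible flow saturates all strict points. -/
lemma saturating_flow (m : V → V → ℝ) (f g : V → ℝ)
    (hg : ∀ x y, g x - g y ≤ m x y)
    (hopt : ∀ g' : V → ℝ, (∀ x y, g' x - g' y ≤ m x y) → ∑ x, |f x - g x| ≤ ∑ x, |f x - g' x|) :
    ∃ φ, Feas m f g φ ∧ (∀ x, g x < f x → dvg φ x = 1) ∧ (∀ x, f x < g x → dvg φ x = -1) := by
  obtain ⟨φ, hfeas, hmax⟩ := exists_max_flow m f g (fun ψ hψ => score_bound m f g ψ hψ)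
  refine ⟨φ, hfeas, fun x hx => deficiency m f g hg hopt φ hfeas hmax x hx, fun x hx => ?_⟩
  set m' : V → V → ℝ := fun a b => m b a with hm'
  set f' : V → ℝ := fun x => - f x with hf'
  set g' : V → ℝ := fun x => - g x with hg'
  have em' : ∀ a b, m' a b = m b a := fun a b => by rw [hm']
  have ef' : ∀ x, f' x = - f x := fun x => by rw [hf']
  have eg' : ∀ x, g' x = - g x := fun x => by rw [hg']
  have em2 : ∀ a b, m a b = m' b a := fun a b => by rw [em' b a]
  have ef2 : ∀ x, f x = - f' x := fun x => by rw [ef' x]; ring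
  have eg2 : ∀ x, g x = - g' x := fun x => by rw [eg' x]; ring
  have hg2 : ∀ x y, g' x - g' y ≤ m' x y := by
    intro x y
    rw [eg' x, eg' y, em' x y]
    linarith [hg y x]
  have hopt2 : ∀ h : V → ℝ, (∀ x y, h x - h y ≤ m' x y) →
      ∑ z, |f' z - g' z| ≤ ∑ z, |f' z - h z| := by
    intro h hh
    have hLip : ∀ x y, (- h x) - (- h y) ≤ m x y := by
      intro x y
      have := hh y x
      rw [em' y x] at this
      linarith
    have hmain := hopt (fun z => - h z) hLip
    calc ∑ z, |f' z - g' z| = ∑ z, |f z - g z| := by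
          apply Finset.sum_congr rfl
          intro z _
          rw [ef' z, eg' z, abs_sub_comm]
          congr 1; ring
      _ ≤ ∑ z, |f z - (- h z)| := hmain
      _ = ∑ z, |f' z - h z| := by
          apply Finset.sum_congr rfl
          intro z _
          rw [ef' z, abs_sub_comm]
          congr 1; ring
  have hfeas2 : Feas m' f' g' (fun p q => φ q p) :=
    Feas_swap m m' f f' g g' φ em' ef' eg' hfeas
  have hmax2 : ∀ ψ, Feas m' f' g' ψ → score f' g' ψ ≤ score f' g' (fun p q => φ q p) := by
    intro ψ hψ
    have hψ' : Feas m f g (fun p q => ψ q p) :=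
      Feas_swap m' m f' f g' g ψ em2 ef2 eg2 hψ
    have h1 : score f g (fun p q => ψ q p) = score f' g' ψ :=
      score_swap f' g' f g ef2 eg2 ψ
    have h2 : score f' g' (fun p q => φ q p) = score f g φ :=
      score_swap f g f' g' ef' eg' φ
    rw [← h1, h2]
    exact hmax _ hψ'
  have hx' : g' x < f' x := by
    rw [eg' x, ef' x]
    linarith
  have := deficiency m' f' g' hg2 hopt2 (fun p q => φ q p) hfeas2 hmax2 x hx'
  rw [dvg_swap] at this
  omega

/-- Remove a unit of flow along a path in the support. -/
lemma deplete (φ : V → V → ℕ) :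
    ∀ (L : List V) (a b : V),
    (a :: L).Chain' (fun p q => 0 < φ p q) → (a :: L).Nodup →
    (a :: L).getLast? = some b →
    ∃ φ' : V → V → ℕ, (∀ p q, φ' p q ≤ φ p q) ∧
      (∀ p q, φ' p q ≠ φ p q → p ∈ a :: L ∧ q ∈ a :: L) ∧
      (∀ x, dvg φ' x = dvg φ x - (if x = a then 1 else 0) + (if x = b then 1 else 0)) ∧
      (L ≠ [] → ∑ p, ∑ q, φ' p q < ∑ p, ∑ q, φ p q) := by
  intro L
  induction L with
  | nil =>
    intro a b _ _ hlast
    have hab : b = a := by simpa using hlast.symm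
    refine ⟨φ, fun p q => le_refl _, fun p q h => absurd rfl h, fun x => ?_, fun h => absurd rfl h⟩
    subst hab; ring
  | cons c L' ih =>
    intro a b hch hnd hlast
    have hrel : 0 < φ a c := (List.isChain_cons_cons.mp hch).1
    have hch' : (c :: L').Chain' (fun p q => 0 < φ p q) := (List.isChain_cons_cons.mp hch).2
    have hnd' : (c :: L').Nodup := hnd.of_cons
    have hamem : a ∉ c :: L' := (List.nodup_cons.mp hnd).1
    have hlast' : (c :: L').getLast? = some b := by rwa [List.getLast?_cons_cons] at hlast
    obtain ⟨φ'', hle, hmod, hdvg, _⟩ := ih c b hch' hnd' hlast'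
    have hac : a ≠ c := fun h => hamem (h ▸ List.mem_cons_self (a := a) (l := L'))
    have hφ''ac : φ'' a c = φ a c := by
      by_contra h
      exact hamem (hmod a c h).1
    have h1 : 1 ≤ φ'' a c := by omega
    refine ⟨subArc φ'' a c, ?_, ?_, ?_, ?_⟩
    · intro p q
      unfold subArc
      by_cases h : p = a ∧ q = c
      · rw [if_pos h]
        calc φ'' p q - 1 ≤ φ'' p q := Nat.sub_le _ _
          _ ≤ φ p q := hle p q
      · rw [if_neg h]; exact hle p q
    · intro p q hne
      unfold subArc at hne
      by_cases h : p = a ∧ q = c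
      · exact ⟨h.1 ▸ List.mem_cons_self, h.2 ▸ List.mem_cons_of_mem _ (List.mem_cons_self)⟩
      · rw [if_neg h] at hne
        obtain ⟨hm1, hm2⟩ := hmod p q hne
        exact ⟨List.mem_cons_of_mem _ hm1, List.mem_cons_of_mem _ hm2⟩
    · intro x
      rw [dvg_subArc φ'' a c hac h1 x, hdvg x]; ring
    · intro _
      apply Finset.sum_lt_sum
      · intro p _
        apply Finset.sum_le_sum
        intro q _
        unfold subArc
        by_cases h : p = a ∧ q = c
        · rw [if_pos h]
          calc φ'' p q - 1 ≤ φ'' p q := Nat.sub_le _ _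
            _ ≤ φ p q := hle p q
        · rw [if_neg h]; exact hle p q
      · refine ⟨a, mem_univ a, ?_⟩
        apply Finset.sum_lt_sum
        · intro q _
          unfold subArc
          by_cases h : a = a ∧ q = c
          · rw [if_pos h]
            calc φ'' a q - 1 ≤ φ'' a q := Nat.sub_le _ _
              _ ≤ φ a q := hle a q
          · rw [if_neg h]; exact hle a q
        · refine ⟨c, mem_univ c, ?_⟩
          unfold subArc
          rw [if_pos ⟨rfl, rfl⟩, hφ''ac]
          omega

/-- Telescoping the triangle inequality along a tight path. -/
lemma chain_teles (m : V → V → ℝ) (g : V → ℝ)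
    (tri : ∀ x y z, m x z ≤ m x y + m y z) :
    ∀ (L : List V) (a b : V), (a :: L).Chain' (fun p q => g p - g q = m p q) →
    (a :: L).getLast? = some b → L ≠ [] → m a b ≤ g a - g b := by
  intro L
  induction L with
  | nil => intro a b _ _ h; exact absurd rfl h
  | cons c L' ih =>
    intro a b hch hlast _
    have hrel : g a - g c = m a c := (List.isChain_cons_cons.mp hch).1
    have hch' : (c :: L').Chain' _ := (List.isChain_cons_cons.mp hch).2
    have hlast' : (c :: L').getLast? = some b := by rwa [List.getLast?_cons_cons] at hlast
    rcases List.eq_nil_or_concat L' with hL' | _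
    · subst hL'
      have : b = c := by simpa using hlast'.symm
      subst this
      linarith
    · have hne : L' ≠ [] := by
        rintro rfl
        rename_i h'
        obtain ⟨_, _, h''⟩ := h'
        simp at h''
      have := ih c b hch' hlast' hne
      have htri := tri a c b
      linarith

lemma decompose (m : V → V → ℝ) (g : V → ℝ)
    (tri : ∀ x y z, m x z ≤ m x y + m y z) :
    ∀ (N : ℕ) (φ : V → V → ℕ), (∑ p, ∑ q, φ p q) ≤ N →
    (∀ a b, 0 < φ a b → Arcs m g a b) →
    (∀ x, -1 ≤ dvg φ x ∧ dvg φ x ≤ 1) →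
    ∃ M : Finset (V × V),
      (∀ p ∈ M, p.1 ≠ p.2 ∧ m p.1 p.2 ≤ g p.1 - g p.2 ∧ dvg φ p.1 = 1 ∧ dvg φ p.2 = -1) ∧
      (∀ p ∈ M, ∀ q ∈ M, p ≠ q → p.1 ≠ q.1 ∧ p.1 ≠ q.2 ∧ p.2 ≠ q.1 ∧ p.2 ≠ q.2) ∧
      (∀ x, dvg φ x = 1 → ∃ p ∈ M, p.1 = x) ∧
      (∀ x, dvg φ x = -1 → ∃ p ∈ M, p.2 = x) := by
  intro N
  induction N with
  | zero =>
    intro φ htot _ _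
    have hzero : ∀ p q, φ p q = 0 := by
      intro p q
      by_contra h
      have h1 : 0 < φ p q := Nat.pos_of_ne_zero h
      have h2 : φ p q ≤ ∑ q', φ p q' := Finset.single_le_sum (fun _ _ => Nat.zero_le _) (mem_univ q)
      have h3 : (∑ q', φ p q') ≤ ∑ p', ∑ q', φ p' q' :=
        Finset.single_le_sum (f := fun p' => ∑ q', φ p' q')
          (fun _ _ => Nat.zero_le _) (mem_univ p)
      omega
    have hdvg0 : ∀ x, dvg φ x = 0 := by
      intro x
      unfold dvg
      have : ∀ y, φ x y = 0 := fun y => hzero x y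
      have h2 : ∀ y, φ y x = 0 := fun y => hzero y x
      simp [this, h2]
    refine ⟨∅, by simp, by simp, fun x hx => by rw [hdvg0 x] at hx; omega,
      fun x hx => by rw [hdvg0 x] at hx; omega⟩
  | succ N ih =>
    intro φ htot hsupp hbd
    classical
    by_cases hex : ∃ a, dvg φ a = 1
    · obtain ⟨a, ha⟩ := hex
      set sup : V → V → Prop := fun p q => 0 < φ p q with hsup
      set C : Finset V := univ.filter (fun w => Relation.ReflTransGen sup a w) with hC
      have haC : a ∈ C := by rw [hC, mem_filter]; exact ⟨mem_univ _, Relation.ReflTransGen.refl⟩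
      have hclosed : ∀ x ∈ C, ∀ y, sup x y → y ∈ C := by
        intro x hx y hxy
        rw [hC, mem_filter] at hx ⊢
        exact ⟨mem_univ _, hx.2.tail hxy⟩
      have hsumC : ∑ x ∈ C, dvg φ x ≤ 0 := by
        rw [cut_sum φ C]
        have e1 : ∑ x ∈ C, ∑ y ∈ Cᶜ, (φ x y : ℤ) = 0 :=
          Finset.sum_eq_zero (fun x hx => Finset.sum_eq_zero (fun y hy => by
            have : φ x y = 0 := by
              by_contra h
              exact (mem_compl.mp hy) (hclosed x hx y (Nat.pos_of_ne_zero h))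
            rw [this]; norm_num))
        have e2 : 0 ≤ ∑ x ∈ C, ∑ y ∈ Cᶜ, (φ y x : ℤ) :=
          Finset.sum_nonneg (fun x _ => Finset.sum_nonneg (fun y _ => Int.natCast_nonneg _))
        omega
      have hexb : ∃ b ∈ C, dvg φ b = -1 := by
        by_contra hno
        push_neg at hno
        have hnn : ∀ x ∈ C.erase a, 0 ≤ dvg φ x := by
          intro x hx
          have h1 := (hbd x).1
          have h2 := hno x (Finset.mem_of_mem_erase hx)
          omega
        have : 0 < ∑ x ∈ C, dvg φ x := by
          rw [← Finset.sum_erase_add C _ haC, ha]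
          have := Finset.sum_nonneg hnn
          omega
        omega
      obtain ⟨b, hbC, hb⟩ := hexb
      have hab : a ≠ b := fun h => by rw [h, hb] at ha; omega
      have hreach : Relation.ReflTransGen sup a b := (mem_filter.mp hbC).2
      obtain ⟨L, hch, hlast, hnd⟩ := exists_nodup_chain sup a b hreach
      have hLne : L ≠ [] := by
        rintro rfl
        exact hab (by simpa using hlast)
      obtain ⟨φ', hle, _, hdvg', htot'⟩ := deplete φ L a b hch hnd hlast
      have hmab : m a b ≤ g a - g b := by
        apply chain_teles m g tri L a b _ hlast hLne
        apply hch.imp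
        intro p q hpq
        exact (hsupp p q hpq).2
      have hsupp' : ∀ p q, 0 < φ' p q → Arcs m g p q := by
        intro p q h
        exact hsupp p q (lt_of_lt_of_le h (hle p q))
      have hdvga : dvg φ' a = 0 := by rw [hdvg' a, if_pos rfl, if_neg hab, ha]; ring
      have hdvgb : dvg φ' b = 0 := by rw [hdvg' b, if_neg (Ne.symm hab), if_pos rfl, hb]; ring
      have hdvgo : ∀ x, x ≠ a → x ≠ b → dvg φ' x = dvg φ x := by
        intro x h1 h2
        rw [hdvg' x, if_neg h1, if_neg h2]; ring
      have hbd' : ∀ x, -1 ≤ dvg φ' x ∧ dvg φ' x ≤ 1 := by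
        intro x
        by_cases h1 : x = a
        · subst h1; rw [hdvga]; omega
        by_cases h2 : x = b
        · subst h2; rw [hdvgb]; omega
        · rw [hdvgo x h1 h2]; exact hbd x
      have htotle : ∑ p, ∑ q, φ' p q ≤ N := by
        have := htot' hLne
        omega
      obtain ⟨M', hM1, hM2, hM3, hM4⟩ := ih φ' htotle hsupp' hbd'
      -- endpoints of M' avoid a and b
      have hfst : ∀ p ∈ M', p.1 ≠ a ∧ p.1 ≠ b ∧ p.2 ≠ a ∧ p.2 ≠ b := by
        intro p hp
        obtain ⟨_, _, h1, h2⟩ := hM1 p hp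
        refine ⟨?_, ?_, ?_, ?_⟩ <;> intro h
        · rw [h, hdvga] at h1; omega
        · rw [h, hdvgb] at h1; omega
        · rw [h, hdvga] at h2; omega
        · rw [h, hdvgb] at h2; omega
      have hnotmem : (a, b) ∉ M' := fun h => (hfst _ h).1 rfl
      have hdvgM' : ∀ p ∈ M', dvg φ p.1 = 1 ∧ dvg φ p.2 = -1 := by
        intro p hp
        obtain ⟨ha1, hb1, ha2, hb2⟩ := hfst p hp
        obtain ⟨_, _, h1, h2⟩ := hM1 p hp
        rw [hdvgo _ ha1 hb1] at h1
        rw [hdvgo _ ha2 hb2] at h2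
        exact ⟨h1, h2⟩
      refine ⟨insert (a, b) M', ?_, ?_, ?_, ?_⟩
      · intro p hp
        rcases Finset.mem_insert.mp hp with h | h
        · subst h; exact ⟨hab, hmab, ha, hb⟩
        · obtain ⟨hc1, hc2, _, _⟩ := hM1 p h
          obtain ⟨hd1, hd2⟩ := hdvgM' p h
          exact ⟨hc1, hc2, hd1, hd2⟩
      · intro p hp q hq hpq
        rcases Finset.mem_insert.mp hp with h1 | h1 <;> rcases Finset.mem_insert.mp hq with h2 | h2
        · exact absurd (h1.trans h2.symm) hpq
        · obtain ⟨e1, e2, e3, e4⟩ := hfst q h2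
          subst h1
          exact ⟨Ne.symm e1, Ne.symm e3, Ne.symm e2, Ne.symm e4⟩
        · obtain ⟨e1, e2, e3, e4⟩ := hfst p h1
          subst h2
          exact ⟨e1, e2, e3, e4⟩
        · exact hM2 p h1 q h2 hpq
      · intro x hx
        by_cases h1 : x = a
        · exact ⟨(a, b), Finset.mem_insert_self _ _, h1.symm⟩
        · have h2 : x ≠ b := fun h => by rw [h, hb] at hx; omega
          obtain ⟨p, hp, hpx⟩ := hM3 x (by rw [hdvgo x h1 h2]; exact hx)
          exact ⟨p, Finset.mem_insert_of_mem hp, hpx⟩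
      · intro x hx
        by_cases h1 : x = b
        · exact ⟨(a, b), Finset.mem_insert_self _ _, h1.symm⟩
        · have h2 : x ≠ a := fun h => by rw [h, ha] at hx; omega
          obtain ⟨p, hp, hpx⟩ := hM4 x (by rw [hdvgo x h2 h1]; exact hx)
          exact ⟨p, Finset.mem_insert_of_mem hp, hpx⟩
    · push_neg at hex
      refine ⟨∅, by simp, by simp, fun x hx => absurd hx (hex x), fun x hx => ?_⟩
      exfalso
      have hall : ∀ y, dvg φ y ≤ 0 := by
        intro y
        have h1 := (hbd y).2
        have h2 := hex y
        omega
      have : ∑ y, dvg φ y < 0 := by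
        have hstep : ∑ y, dvg φ y ≤ ∑ y ∈ univ.erase x, dvg φ y + dvg φ x := by
          rw [Finset.sum_erase_add univ _ (mem_univ x)]
        have : ∑ y ∈ univ.erase x, dvg φ y ≤ 0 :=
          Finset.sum_nonpos (fun y _ => hall y)
        omega
      rw [sum_dvg_univ φ] at this
      omega

/-- Abstract duality: an optimal Lipschitz approximant is certified by a matching. -/
theorem abstract_duality (m : V → V → ℝ) (f g : V → ℝ)
    (tri : ∀ x y z, m x z ≤ m x y + m y z)
    (hg : ∀ x y, g x - g y ≤ m x y)
    (hopt : ∀ g' : V → ℝ, (∀ x y, g' x - g' y ≤ m x y) → ∑ x, |f x - g x| ≤ ∑ x, |f x - g' x|) :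
    ∃ M : Finset (V × V),
      (∀ p ∈ M, p.1 ≠ p.2 ∧ 0 < f p.1 - f p.2 - m p.1 p.2) ∧
      (∀ p ∈ M, ∀ q ∈ M, p ≠ q → p.1 ≠ q.1 ∧ p.1 ≠ q.2 ∧ p.2 ≠ q.1 ∧ p.2 ≠ q.2) ∧
      ∑ x, |f x - g x| ≤ ∑ p ∈ M, (f p.1 - f p.2 - m p.1 p.2) := by
  classical
  obtain ⟨φ, hfeas, hP, hN⟩ := saturating_flow m f g hg hopt
  obtain ⟨M0, hM1, hM2, hM3, hM4⟩ :=
    decompose m g tri (∑ p, ∑ q, φ p q) φ (le_refl _) hfeas.1 (fun x => (hfeas.2 x).1)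
  set M : Finset (V × V) := M0.filter (fun p => g p.1 < f p.1 ∨ f p.2 < g p.2) with hM
  -- basic sign facts for pairs of M0
  have hsign : ∀ p ∈ M0, g p.1 ≤ f p.1 ∧ f p.2 ≤ g p.2 := by
    intro p hp
    obtain ⟨_, _, h1, h2⟩ := hM1 p hp
    constructor
    · by_contra hc
      have := (hfeas.2 p.1).2.2 (not_le.mp hc)
      omega
    · by_contra hc
      have := (hfeas.2 p.2).2.1 (not_le.mp hc)
      omega
  have hkey : ∀ p ∈ M0, (f p.1 - g p.1) + (g p.2 - f p.2) ≤ f p.1 - f p.2 - m p.1 p.2 := by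
    intro p hp
    have := (hM1 p hp).2.1
    linarith
  refine ⟨M, ?_, ?_, ?_⟩
  · intro p hp
    rw [hM, mem_filter] at hp
    obtain ⟨hp0, hcond⟩ := hp
    refine ⟨(hM1 p hp0).1, ?_⟩
    have h1 := (hsign p hp0).1
    have h2 := (hsign p hp0).2
    have h3 := hkey p hp0
    rcases hcond with h | h <;> linarith
  · intro p hp q hq hpq
    rw [hM, mem_filter] at hp hq
    exact hM2 p hp.1 q hq.1 hpq
  · -- the sum inequality
    have habs : ∀ x : V, |f x - g x|
        = (if g x < f x then f x - g x else 0) + (if f x < g x then g x - f x else 0) := by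
      intro x
      rcases lt_trichotomy (f x) (g x) with h | h | h
      · rw [if_neg (by linarith), if_pos h, abs_of_neg (by linarith)]; ring
      · rw [if_neg (by linarith), if_neg (by linarith), h]; simp
      · rw [if_pos h, if_neg (by linarith), abs_of_pos (by linarith)]; ring
    rw [Finset.sum_congr rfl (fun x _ => habs x), Finset.sum_add_distrib]
    rw [← Finset.sum_filter, ← Finset.sum_filter]
    set Pu : Finset V := univ.filter (fun x => g x < f x) with hPu
    set Nu : Finset V := univ.filter (fun x => f x < g x) with hNu
    have hinjf : ∀ p ∈ M, ∀ q ∈ M, p.1 = q.1 → p = q := by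
      intro p hp q hq h
      by_contra hpq
      exact (hM2 p (mem_filter.mp hp).1 q (mem_filter.mp hq).1 hpq).1 h
    have hinjs : ∀ p ∈ M, ∀ q ∈ M, p.2 = q.2 → p = q := by
      intro p hp q hq h
      by_contra hpq
      exact (hM2 p (mem_filter.mp hp).1 q (mem_filter.mp hq).1 hpq).2.2.2 h
    have hPsum : ∑ x ∈ Pu, (f x - g x) ≤ ∑ p ∈ M, (f p.1 - g p.1) := by
      have e : ∑ x ∈ M.image Prod.fst, (f x - g x) = ∑ p ∈ M, (f p.1 - g p.1) :=
        Finset.sum_image hinjf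
      rw [← e]
      apply Finset.sum_le_sum_of_subset_of_nonneg
      · intro x hx
        rw [hPu, mem_filter] at hx
        obtain ⟨p, hp, hpx⟩ := hM3 x (hP x hx.2)
        have hpM : p ∈ M := by
          rw [hM, mem_filter]
          exact ⟨hp, Or.inl (hpx ▸ hx.2)⟩
        exact Finset.mem_image.mpr ⟨p, hpM, hpx⟩
      · intro x hx hnx
        obtain ⟨p, hp, hpx⟩ := Finset.mem_image.mp hx
        have := (hsign p (mem_filter.mp hp).1).1
        rw [← hpx]
        linarith
    have hNsum : ∑ x ∈ Nu, (g x - f x) ≤ ∑ p ∈ M, (g p.2 - f p.2) := by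
      have e : ∑ x ∈ M.image Prod.snd, (g x - f x) = ∑ p ∈ M, (g p.2 - f p.2) :=
        Finset.sum_image hinjs
      rw [← e]
      apply Finset.sum_le_sum_of_subset_of_nonneg
      · intro x hx
        rw [hNu, mem_filter] at hx
        obtain ⟨p, hp, hpx⟩ := hM4 x (hN x hx.2)
        have hpM : p ∈ M := by
          rw [hM, mem_filter]
          exact ⟨hp, Or.inr (hpx ▸ hx.2)⟩
        exact Finset.mem_image.mpr ⟨p, hpM, hpx⟩
      · intro x hx hnx
        obtain ⟨p, hp, hpx⟩ := Finset.mem_image.mp hx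
        have := (hsign p (mem_filter.mp hp).1).2
        rw [← hpx]
        linarith
    calc (∑ x ∈ univ.filter (fun x => g x < f x), (f x - g x))
          + ∑ x ∈ univ.filter (fun x => f x < g x), (g x - f x)
        ≤ (∑ p ∈ M, (f p.1 - g p.1)) + ∑ p ∈ M, (g p.2 - f p.2) := by
          exact add_le_add hPsum hNsum
      _ = ∑ p ∈ M, ((f p.1 - g p.1) + (g p.2 - f p.2)) := (Finset.sum_add_distrib).symm
      _ ≤ ∑ p ∈ M, (f p.1 - f p.2 - m p.1 p.2) :=
          Finset.sum_le_sum (fun p hp => hkey p (mem_filter.mp hp).1)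


/-! ### Grid-specific lemmas -/

/-- one-coordinate version of the quasimetric -/
noncomputable def mu (l u : ℕ → ℝ) (a b : ℕ) : ℝ :=
  (∑ t ∈ Finset.Ico b a, u t) - ∑ t ∈ Finset.Ico a b, l t

lemma qm_eq_sum_mu (d : ℕ) (l u : Fin d → ℕ → ℝ) (x y : Fin d → ℕ) :
    qm d l u x y = ∑ r : Fin d, mu (l r) (u r) (x r) (y r) := rfl

lemma mu_self (l u : ℕ → ℝ) (a : ℕ) : mu l u a a = 0 := by
  unfold mu; simp

lemma mu_triangle (n : ℕ) (l u : ℕ → ℝ) (hlu : ∀ t, 1 ≤ t → t + 1 ≤ n → l t ≤ u t)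
    (a b c : ℕ) (ha1 : 1 ≤ a) (han : a ≤ n) (hb1 : 1 ≤ b) (hbn : b ≤ n)
    (hc1 : 1 ≤ c) (hcn : c ≤ n) :
    mu l u a c ≤ mu l u a b + mu l u b c := by
  have key : ∀ s t : ℕ, 1 ≤ s → t ≤ n → ∑ t' ∈ Finset.Ico s t, l t' ≤ ∑ t' ∈ Finset.Ico s t, u t' := by
    intro s t hs htn
    apply Finset.sum_le_sum
    intro i hi
    rw [Finset.mem_Ico] at hi
    exact hlu i (by omega) (by omega)
  have empt : ∀ s t : ℕ, t ≤ s → (Finset.Ico s t : Finset ℕ) = ∅ :=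
    fun s t h => Finset.Ico_eq_empty (by omega)
  unfold mu
  rcases le_total a b with hab | hab <;> rcases le_total b c with hbc | hbc
  · -- a ≤ b ≤ c
    have h1 : ∑ t ∈ Finset.Ico a b, l t + ∑ t ∈ Finset.Ico b c, l t = ∑ t ∈ Finset.Ico a c, l t :=
      Finset.sum_Ico_consecutive _ hab hbc
    rw [empt b a hab, empt c b hbc, empt c a (le_trans hab hbc)]
    simp only [Finset.sum_empty]
    linarith
  · rcases le_total a c with hac | hac
    · -- a ≤ c ≤ b
      have h1 : ∑ t ∈ Finset.Ico a c, l t + ∑ t ∈ Finset.Ico c b, l t = ∑ t ∈ Finset.Ico a b, l t :=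
        Finset.sum_Ico_consecutive _ hac hbc
      rw [empt b a hab, empt c a hac, empt b c hbc]
      simp only [Finset.sum_empty]
      have := key c b hc1 hbn
      linarith
    · -- c ≤ a ≤ b
      have h1 : ∑ t ∈ Finset.Ico c a, u t + ∑ t ∈ Finset.Ico a b, u t = ∑ t ∈ Finset.Ico c b, u t :=
        Finset.sum_Ico_consecutive _ hac hab
      rw [empt b a hab, empt a c hac, empt b c (le_trans hac hab)]
      simp only [Finset.sum_empty]
      have := key a b ha1 hbn
      linarith
  · rcases le_total a c with hac | hac
    · -- b ≤ a ≤ c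
      have h1 : ∑ t ∈ Finset.Ico b a, l t + ∑ t ∈ Finset.Ico a c, l t = ∑ t ∈ Finset.Ico b c, l t :=
        Finset.sum_Ico_consecutive _ hab hac
      rw [empt a b hab, empt c a hac, empt c b (le_trans hab hac)]
      simp only [Finset.sum_empty]
      have := key b a hb1 han
      linarith
    · -- b ≤ c ≤ a
      have h1 : ∑ t ∈ Finset.Ico b c, u t + ∑ t ∈ Finset.Ico c a, u t = ∑ t ∈ Finset.Ico b a, u t :=
        Finset.sum_Ico_consecutive _ hbc hac
      rw [empt a b hab, empt c b hbc, empt a c hac]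
      simp only [Finset.sum_empty]
      have := key b c hb1 hcn
      linarith
  · -- c ≤ b ≤ a
    have h1 : ∑ t ∈ Finset.Ico c b, u t + ∑ t ∈ Finset.Ico b a, u t = ∑ t ∈ Finset.Ico c a, u t :=
      Finset.sum_Ico_consecutive _ hbc hab
    rw [empt a b hab, empt b c hbc, empt a c (le_trans hbc hab)]
    simp only [Finset.sum_empty]
    linarith

lemma qm_self (d : ℕ) (l u : Fin d → ℕ → ℝ) (x : Fin d → ℕ) : qm d l u x x = 0 := by
  rw [qm_eq_sum_mu]
  exact Finset.sum_eq_zero (fun r _ => mu_self _ _ _)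

lemma qm_triangle (n d : ℕ) (l u : Fin d → ℕ → ℝ)
    (hlu : ∀ r : Fin d, ∀ t : ℕ, 1 ≤ t → t + 1 ≤ n → l r t ≤ u r t)
    (x y z : Fin d → ℕ) (hx : inGrid n d x) (hy : inGrid n d y) (hz : inGrid n d z) :
    qm d l u x z ≤ qm d l u x y + qm d l u y z := by
  rw [qm_eq_sum_mu, qm_eq_sum_mu, qm_eq_sum_mu, ← Finset.sum_add_distrib]
  apply Finset.sum_le_sum
  intro r _
  exact mu_triangle n (l r) (u r) (hlu r) (x r) (y r) (z r)
    (hx r).1 (hx r).2 (hy r).1 (hy r).2 (hz r).1 (hz r).2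

/-- `qm` between a point and its successor in direction `r`. -/
lemma qm_up (d : ℕ) (l u : Fin d → ℕ → ℝ) (x : Fin d → ℕ) (r : Fin d) :
    qm d l u (Function.update x r (x r + 1)) x = u r (x r) ∧
    qm d l u x (Function.update x r (x r + 1)) = - l r (x r) := by
  constructor
  · rw [qm_eq_sum_mu, Finset.sum_eq_single r]
    · rw [Function.update_self]
      unfold mu
      rw [Finset.Ico_eq_empty (by omega : ¬ x r + 1 < x r)]
      have : Finset.Ico (x r) (x r + 1) = {x r} := by
        rw [Finset.Ico_add_one_right_eq_Icc, Finset.Icc_self]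
      rw [this]
      simp
    · intro r' _ hr'
      rw [Function.update_of_ne hr', mu_self]
    · intro h
      exact absurd (Finset.mem_univ r) h
  · rw [qm_eq_sum_mu, Finset.sum_eq_single r]
    · rw [Function.update_self]
      unfold mu
      rw [Finset.Ico_eq_empty (by omega : ¬ x r + 1 < x r)]
      have : Finset.Ico (x r) (x r + 1) = {x r} := by
        rw [Finset.Ico_add_one_right_eq_Icc, Finset.Icc_self]
      rw [this]
      simp
    · intro r' _ hr'
      rw [Function.update_of_ne hr', mu_self]
    · intro h
      exact absurd (Finset.mem_univ r) h


/-- changing one coordinate of `y` changes `qm x y` only in that coordinate term -/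
lemma qm_update_diff (d : ℕ) (l u : Fin d → ℕ → ℝ) (x y : Fin d → ℕ) (r : Fin d) (v : ℕ) :
    qm d l u x y - qm d l u x (Function.update y r v)
      = mu (l r) (u r) (x r) (y r) - mu (l r) (u r) (x r) v := by
  rw [qm_eq_sum_mu, qm_eq_sum_mu, ← Finset.sum_sub_distrib, Finset.sum_eq_single r]
  · rw [Function.update_self]
  · intro r' _ hr'
    rw [Function.update_of_ne hr', sub_self]
  · intro h
    exact absurd (Finset.mem_univ r) h

lemma memP_lip (n d : ℕ) (l u : Fin d → ℕ → ℝ) (g : (Fin d → ℕ) → ℝ)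
    (hgP : memP n d l u g) :
    ∀ x y : Fin d → ℕ, inGrid n d x → inGrid n d y → g x - g y ≤ qm d l u x y := by
  suffices H : ∀ k : ℕ, ∀ x y : Fin d → ℕ, inGrid n d x → inGrid n d y →
      (∑ r : Fin d, ((x r - y r) + (y r - x r))) ≤ k → g x - g y ≤ qm d l u x y by
    intro x y hx hy
    exact H _ x y hx hy (le_refl _)
  intro k
  induction k with
  | zero =>
    intro x y hx hy hk
    have hxy : x = y := by
      funext r
      have h1 : ((x r - y r) + (y r - x r)) ≤ 0 := by
        calc ((x r - y r) + (y r - x r)) ≤ ∑ r' : Fin d, ((x r' - y r') + (y r' - x r')) :=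
              Finset.single_le_sum (f := fun r' => (x r' - y r') + (y r' - x r'))
                (fun _ _ => Nat.zero_le _) (mem_univ r)
          _ ≤ 0 := hk
      omega
    rw [hxy, qm_self]
    simp
  | succ k ih =>
    intro x y hx hy hk
    by_cases hxy : x = y
    · rw [hxy, qm_self]; simp
    · have hex : ∃ r, x r ≠ y r := by
        by_contra h
        push_neg at h
        exact hxy (funext h)
      obtain ⟨r, hr⟩ := hex
      rcases Nat.lt_or_ge (y r) (x r) with hlt | hge
      · -- move y up in direction r
        set y' := Function.update y r (y r + 1) with hy'
        have hy'grid : inGrid n d y' := by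
          intro r'
          by_cases h : r' = r
          · subst h
            rw [hy', Function.update_self]
            constructor
            · omega
            · have := (hx r').2; omega
          · rw [hy', Function.update_of_ne h]
            exact hy r'
        have hstep : g y' - g y ≤ u r (y r) := (hgP r y hy (by have := (hx r).2; omega)).2
        have hmeas : (∑ r' : Fin d, ((x r' - y' r') + (y' r' - x r'))) ≤ k := by
          have hterm : ∀ r', ((x r' - y' r') + (y' r' - x r'))
              = if r' = r then (x r' - y r' - 1) + (y r' - x r') else (x r' - y r') + (y r' - x r') := by
            intro r'
            by_cases h : r' = r
            · subst h
              rw [hy', Function.update_self, if_pos rfl]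
              omega
            · rw [hy', Function.update_of_ne h, if_neg h]
          calc (∑ r' : Fin d, ((x r' - y' r') + (y' r' - x r')))
              = ∑ r' : Fin d, (if r' = r then (x r' - y r' - 1) + (y r' - x r')
                  else (x r' - y r') + (y r' - x r')) := Finset.sum_congr rfl (fun r' _ => hterm r')
            _ ≤ k := by
              have hsplit1 : ∑ r' : Fin d, (if r' = r then (x r' - y r' - 1) + (y r' - x r')
                  else (x r' - y r') + (y r' - x r'))
                  + ∑ r' : Fin d, (if r' = r then 1 else 0)
                  ≤ ∑ r' : Fin d, ((x r' - y r') + (y r' - x r')) := by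
                rw [← Finset.sum_add_distrib]
                apply Finset.sum_le_sum
                intro r' _
                by_cases h : r' = r
                · subst h; rw [if_pos rfl, if_pos rfl]; omega
                · rw [if_neg h, if_neg h]; omega
              have hone : (∑ r' : Fin d, (if r' = r then (1:ℕ) else 0)) = 1 := by simp
              omega
        have hqm : qm d l u x y = qm d l u x y' + u r (y r) := by
          have := qm_update_diff d l u x y r (y r + 1)
          have hmu : mu (l r) (u r) (x r) (y r) - mu (l r) (u r) (x r) (y r + 1) = u r (y r) := by
            unfold mu
            have e1 : Finset.Ico (x r) (y r) = ∅ := Finset.Ico_eq_empty (by omega)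
            have e2 : Finset.Ico (x r) (y r + 1) = ∅ := Finset.Ico_eq_empty (by omega)
            have e3 : ∑ t ∈ Finset.Ico (y r) (x r), u r t
                = u r (y r) + ∑ t ∈ Finset.Ico (y r + 1) (x r), u r t :=
              Finset.sum_eq_sum_Ico_succ_bot hlt _
            rw [e1, e2, e3]
            simp
          rw [← hy'] at this
          linarith
        have hih := ih x y' hx hy'grid hmeas
        linarith
      · -- x r < y r : move y down in direction r
        have hlt : x r < y r := by omega
        set y' := Function.update y r (y r - 1) with hy'
        have hy'grid : inGrid n d y' := by
          intro r'
          by_cases h : r' = r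
          · subst h
            rw [hy', Function.update_self]
            have := (hx r').1
            have := (hy r').2
            omega
          · rw [hy', Function.update_of_ne h]
            exact hy r'
        have hupd : Function.update y' r (y' r + 1) = y := by
          funext r'
          by_cases h : r' = r
          · subst h
            rw [Function.update_self, hy', Function.update_self]
            omega
          · rw [Function.update_of_ne h, hy', Function.update_of_ne h]
        have hy'r : y' r = y r - 1 := by rw [hy', Function.update_self]
        have hstep : g y' - g y ≤ - l r (y r - 1) := by
          have h2 : y' r + 1 ≤ n := by
            rw [hy'r]
            have := (hy r).2
            omega
          have := (hgP r y' hy'grid h2).1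
          rw [hupd, hy'r] at this
          linarith
        have hmeas : (∑ r' : Fin d, ((x r' - y' r') + (y' r' - x r'))) ≤ k := by
          have hterm : ∀ r', ((x r' - y' r') + (y' r' - x r'))
              = if r' = r then (x r' - y r') + (y r' - 1 - x r') else (x r' - y r') + (y r' - x r') := by
            intro r'
            by_cases h : r' = r
            · subst h
              rw [hy', Function.update_self, if_pos rfl]
              omega
            · rw [hy', Function.update_of_ne h, if_neg h]
          calc (∑ r' : Fin d, ((x r' - y' r') + (y' r' - x r')))
              = ∑ r' : Fin d, (if r' = r then (x r' - y r') + (y r' - 1 - x r')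
                  else (x r' - y r') + (y r' - x r')) := Finset.sum_congr rfl (fun r' _ => hterm r')
            _ ≤ k := by
              have hsplit1 : ∑ r' : Fin d, (if r' = r then (x r' - y r') + (y r' - 1 - x r')
                  else (x r' - y r') + (y r' - x r'))
                  + ∑ r' : Fin d, (if r' = r then 1 else 0)
                  ≤ ∑ r' : Fin d, ((x r' - y r') + (y r' - x r')) := by
                rw [← Finset.sum_add_distrib]
                apply Finset.sum_le_sum
                intro r' _
                by_cases h : r' = r
                · subst h; rw [if_pos rfl, if_pos rfl]; omega
                · rw [if_neg h, if_neg h]; omega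
              have hone : (∑ r' : Fin d, (if r' = r then (1:ℕ) else 0)) = 1 := by simp
              omega
        have hqm : qm d l u x y = qm d l u x y' - l r (y r - 1) := by
          have := qm_update_diff d l u x y r (y r - 1)
          have hmu : mu (l r) (u r) (x r) (y r) - mu (l r) (u r) (x r) (y r - 1)
              = - l r (y r - 1) := by
            unfold mu
            have e1 : Finset.Ico (y r) (x r) = ∅ := Finset.Ico_eq_empty (by omega)
            have e2 : Finset.Ico (y r - 1) (x r) = ∅ := Finset.Ico_eq_empty (by omega)
            have e3 : ∑ t ∈ Finset.Ico (x r) (y r), l r t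
                = ∑ t ∈ Finset.Ico (x r) (y r - 1), l r t + l r (y r - 1) := by
              have hyr : y r = (y r - 1) + 1 := by omega
              rw [hyr]
              have : y r - 1 + 1 - 1 = y r - 1 := by omega
              rw [this]
              exact Finset.sum_Ico_succ_top (by omega) _
            rw [e1, e2, e3]
            simp
          rw [← hy'] at this
          linarith
        have hih := ih x y' hx hy'grid hmeas
        linarith

/-- Clamp a point into the grid. -/
def clamp (n d : ℕ) (x : Fin d → ℕ) : Fin d → ℕ := fun r => min (max (x r) 1) n

lemma clamp_inGrid (n d : ℕ) (hn : 1 ≤ n) (x : Fin d → ℕ) : inGrid n d (clamp n d x) := by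
  intro r
  unfold clamp
  omega

lemma clamp_eq (n d : ℕ) (x : Fin d → ℕ) (hx : inGrid n d x) : clamp n d x = x := by
  funext r
  have := hx r
  unfold clamp
  omega

/-- Extension of a grid-Lipschitz function to a member of `P(B)`. -/
lemma ext_memP (n d : ℕ) (hn : 1 ≤ n) (l u : Fin d → ℕ → ℝ) (h : (Fin d → ℕ) → ℝ)
    (hlip : ∀ x y, inGrid n d x → inGrid n d y → h x - h y ≤ qm d l u x y) :
    memP n d l u (fun x => h (clamp n d x)) := by
  intro r x hx hxr
  have hx' : inGrid n d (Function.update x r (x r + 1)) := by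
    intro r'
    by_cases hr : r' = r
    · subst hr
      rw [Function.update_self]
      exact ⟨by have := (hx r').1; omega, hxr⟩
    · rw [Function.update_of_ne hr]; exact hx r'
  simp only []
  rw [clamp_eq n d x hx, clamp_eq n d _ hx']
  have h1 := hlip (Function.update x r (x r + 1)) x hx' hx
  have h2 := hlip x (Function.update x r (x r + 1)) hx hx'
  obtain ⟨e1, e2⟩ := qm_up d l u x r
  rw [e1] at h1
  rw [e2] at h2
  exact ⟨by linarith, by linarith⟩

/-- The explicit member of `P(B)` with increments `u`. -/
noncomputable def gZero (d : ℕ) (u : Fin d → ℕ → ℝ) : (Fin d → ℕ) → ℝ :=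
  fun x => ∑ r : Fin d, ∑ t ∈ Finset.Ico 1 (x r), u r t

lemma gZero_memP (n d : ℕ) (l u : Fin d → ℕ → ℝ)
    (hlu : ∀ r : Fin d, ∀ t : ℕ, 1 ≤ t → t + 1 ≤ n → l r t ≤ u r t) :
    memP n d l u (gZero d u) := by
  intro r x hx hxr
  have hdiff : gZero d u (Function.update x r (x r + 1)) - gZero d u x = u r (x r) := by
    unfold gZero
    rw [← Finset.sum_sub_distrib, Finset.sum_eq_single r]
    · rw [Function.update_self]
      have : ∑ t ∈ Finset.Ico 1 (x r + 1), u r t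
          = ∑ t ∈ Finset.Ico 1 (x r), u r t + u r (x r) :=
        Finset.sum_Ico_succ_top (by have := (hx r).1; omega) _
      rw [this]; ring
    · intro r' _ hr'
      rw [Function.update_of_ne hr', sub_self]
    · intro hmem
      exact absurd (Finset.mem_univ r) hmem
  rw [hdiff]
  exact ⟨hlu r (x r) (hx r).1 hxr, le_refl _⟩

lemma exists_min_lip {V : Type*} [Fintype V] (fV : V → ℝ) (mV : V → V → ℝ)
    (h0 : V → ℝ) (hh0 : ∀ a b, h0 a - h0 b ≤ mV a b) :
    ∃ hstar : V → ℝ, (∀ a b, hstar a - hstar b ≤ mV a b) ∧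
      ∀ h : V → ℝ, (∀ a b, h a - h b ≤ mV a b) →
        ∑ a, |fV a - hstar a| ≤ ∑ a, |fV a - h a| := by
  classical
  set cost : (V → ℝ) → ℝ := fun h => ∑ a, |fV a - h a| with hcost
  have hcont : Continuous cost := by
    apply continuous_finset_sum
    intro a _
    exact (continuous_const.sub (continuous_apply a)).abs
  set K : Set (V → ℝ) := {h | (∀ a b, h a - h b ≤ mV a b) ∧ cost h ≤ cost h0} with hK
  have hKne : K.Nonempty := ⟨h0, hh0, le_refl _⟩
  have hKclosed : IsClosed K := by
    have e : K = {h : V → ℝ | ∀ a b, h a - h b ≤ mV a b} ∩ {h | cost h ≤ cost h0} := rfl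
    rw [e]
    apply IsClosed.inter
    · have e2 : {h : V → ℝ | ∀ a b, h a - h b ≤ mV a b}
          = ⋂ a, ⋂ b, {h : V → ℝ | h a - h b ≤ mV a b} := by
        ext h
        simp [Set.mem_iInter]
      rw [e2]
      exact isClosed_iInter (fun a => isClosed_iInter (fun b =>
        isClosed_le ((continuous_apply a).sub (continuous_apply b)) continuous_const))
    · exact isClosed_le hcont continuous_const
  have hKsub : K ⊆ Set.pi Set.univ (fun a => Set.Icc (fV a - cost h0) (fV a + cost h0)) := by
    intro h hh a _
    have h1 : |fV a - h a| ≤ cost h :=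
      Finset.single_le_sum (f := fun i => |fV i - h i|) (fun i _ => abs_nonneg _) (mem_univ a)
    have h2 : cost h ≤ cost h0 := hh.2
    have h3 := abs_le.mp (le_trans h1 h2)
    exact ⟨by linarith [h3.2], by linarith [h3.1]⟩
  have hKcompact : IsCompact K :=
    IsCompact.of_isClosed_subset (isCompact_univ_pi (fun a => isCompact_Icc)) hKclosed hKsub
  obtain ⟨hstar, hstarK, hmin⟩ := hKcompact.exists_isMinOn hKne hcont.continuousOn
  refine ⟨hstar, hstarK.1, ?_⟩
  intro h hLip
  by_cases hc : cost h ≤ cost h0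
  · exact (isMinOn_iff.mp hmin) h ⟨hLip, hc⟩
  · push_neg at hc
    have := (isMinOn_iff.mp hmin) h0 ⟨hh0, le_refl _⟩
    linarith

end Stmt9Aux

/-- the (unnormalized) `L_1`-distance of `f` to `P(B)` equals the
maximum weight of a matching in the violation graph of `f`. -/
theorem stmt9 (n d : ℕ) (hn : 2 ≤ n) (hd : 1 ≤ d)
    (l u : Fin d → ℕ → ℝ)
    (hlu : ∀ r : Fin d, ∀ t : ℕ, 1 ≤ t → t + 1 ≤ n → l r t < u r t)
    (f : (Fin d → ℕ) → ℝ) :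
    sInf {s : ℝ | ∃ g : (Fin d → ℕ) → ℝ, memP n d l u g ∧
        s = ∑ x ∈ Finset.Icc (fun _ => 1) (fun _ => n), |f x - g x|}
      = sSup {s : ℝ | ∃ M : Finset ((Fin d → ℕ) × (Fin d → ℕ)),
          IsMatching n d l u f M ∧ s = ∑ p ∈ M, vs d l u f p.1 p.2} := by
  classical
  set G : Finset (Fin d → ℕ) := Finset.Icc (fun _ => 1) (fun _ => n) with hG
  have mem_grid : ∀ x : Fin d → ℕ, x ∈ G ↔ inGrid n d x := by
    intro x
    rw [hG, Finset.mem_Icc]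
    constructor
    · rintro ⟨h1, h2⟩ r
      exact ⟨Pi.le_def.mp h1 r, Pi.le_def.mp h2 r⟩
    · intro h
      exact ⟨Pi.le_def.mpr (fun r => (h r).1), Pi.le_def.mpr (fun r => (h r).2)⟩
  have hlu' : ∀ r : Fin d, ∀ t : ℕ, 1 ≤ t → t + 1 ≤ n → l r t ≤ u r t :=
    fun r t h1 h2 => le_of_lt (hlu r t h1 h2)
  set g0 : (Fin d → ℕ) → ℝ := Stmt9Aux.gZero d u with hg0def
  have hg0 : memP n d l u g0 := Stmt9Aux.gZero_memP n d l u hlu'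
  -- the easy direction: any matching weight is at most any repair cost
  have easy : ∀ gP : (Fin d → ℕ) → ℝ, memP n d l u gP →
      ∀ M : Finset ((Fin d → ℕ) × (Fin d → ℕ)), IsMatching n d l u f M →
      ∑ p ∈ M, vs d l u f p.1 p.2 ≤ ∑ x ∈ G, |f x - gP x| := by
    intro gP hgP M hM
    have hlip := Stmt9Aux.memP_lip n d l u gP hgP
    have hpair : ∀ p ∈ M, vs d l u f p.1 p.2 ≤ |f p.1 - gP p.1| + |f p.2 - gP p.2| := by
      intro p hp
      obtain ⟨h1, h2, _, _⟩ := hM.1 p hp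
      apply max_le
      · have h3 := hlip p.1 p.2 h1 h2
        have e1 := le_abs_self (f p.1 - gP p.1)
        have e2 := neg_abs_le (f p.2 - gP p.2)
        linarith
      · have h3 := hlip p.2 p.1 h2 h1
        have e1 := le_abs_self (f p.2 - gP p.2)
        have e2 := neg_abs_le (f p.1 - gP p.1)
        linarith
    have hdisj : (↑M : Set ((Fin d → ℕ) × (Fin d → ℕ))).PairwiseDisjoint
        (fun p => ({p.1, p.2} : Finset (Fin d → ℕ))) := by
      intro p hp q hq hpq
      obtain ⟨d1, d2, d3, d4⟩ := hM.2 p (Finset.mem_coe.mp hp) q (Finset.mem_coe.mp hq) hpq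
      refine Finset.disjoint_left.mpr ?_
      intro x hx1 hx2
      simp only [Finset.mem_insert, Finset.mem_singleton] at hx1 hx2
      rcases hx1 with rfl | rfl <;> rcases hx2 with h | h
      · exact d1 h
      · exact d2 h
      · exact d3 h
      · exact d4 h
    calc ∑ p ∈ M, vs d l u f p.1 p.2
        ≤ ∑ p ∈ M, (|f p.1 - gP p.1| + |f p.2 - gP p.2|) := Finset.sum_le_sum hpair
      _ = ∑ x ∈ M.biUnion (fun p => {p.1, p.2}), |f x - gP x| := by
          rw [Finset.sum_biUnion hdisj]
          apply Finset.sum_congr rfl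
          intro p hp
          rw [Finset.sum_pair (hM.1 p hp).2.2.1]
      _ ≤ ∑ x ∈ G, |f x - gP x| := by
          apply Finset.sum_le_sum_of_subset_of_nonneg
          · intro x hx
            rw [Finset.mem_biUnion] at hx
            obtain ⟨p, hp, hxp⟩ := hx
            rw [Finset.mem_insert, Finset.mem_singleton] at hxp
            obtain ⟨i1, i2, _, _⟩ := hM.1 p hp
            rcases hxp with rfl | rfl
            · exact (mem_grid _).mpr i1
            · exact (mem_grid _).mpr i2
          · intro x _ _
            exact abs_nonneg _
  -- nonemptiness and boundedness of both sets
  have hAmem0 : (∑ x ∈ G, |f x - g0 x|) ∈ {s : ℝ | ∃ g : (Fin d → ℕ) → ℝ, memP n d l u g ∧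
      s = ∑ x ∈ G, |f x - g x|} := ⟨g0, hg0, rfl⟩
  have hAne : {s : ℝ | ∃ g : (Fin d → ℕ) → ℝ, memP n d l u g ∧
      s = ∑ x ∈ G, |f x - g x|}.Nonempty := ⟨_, hAmem0⟩
  have hbddA : BddBelow {s : ℝ | ∃ g : (Fin d → ℕ) → ℝ, memP n d l u g ∧
      s = ∑ x ∈ G, |f x - g x|} := by
    refine ⟨0, fun a ha => ?_⟩
    obtain ⟨g, _, rfl⟩ := ha
    exact Finset.sum_nonneg (fun x _ => abs_nonneg _)
  have hBmem0 : (0:ℝ) ∈ {s : ℝ | ∃ M : Finset ((Fin d → ℕ) × (Fin d → ℕ)),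
      IsMatching n d l u f M ∧ s = ∑ p ∈ M, vs d l u f p.1 p.2} := by
    refine ⟨∅, ⟨?_, ?_⟩, by simp⟩
    · intro p hp
      exact absurd hp (Finset.notMem_empty p)
    · intro p hp
      exact absurd hp (Finset.notMem_empty p)
  have hBne : {s : ℝ | ∃ M : Finset ((Fin d → ℕ) × (Fin d → ℕ)),
      IsMatching n d l u f M ∧ s = ∑ p ∈ M, vs d l u f p.1 p.2}.Nonempty := ⟨0, hBmem0⟩
  have hbddB : BddAbove {s : ℝ | ∃ M : Finset ((Fin d → ℕ) × (Fin d → ℕ)),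
      IsMatching n d l u f M ∧ s = ∑ p ∈ M, vs d l u f p.1 p.2} := by
    refine ⟨∑ x ∈ G, |f x - g0 x|, fun b hb => ?_⟩
    obtain ⟨M, hM, rfl⟩ := hb
    exact easy g0 hg0 M hM
  -- the hard direction: build an optimal repair and a certifying matching
  have hh0 : ∀ a b : {x // x ∈ G}, g0 a.1 - g0 b.1 ≤ qm d l u a.1 b.1 :=
    fun a b => Stmt9Aux.memP_lip n d l u g0 hg0 a.1 b.1
      ((mem_grid _).mp a.2) ((mem_grid _).mp b.2)
  obtain ⟨hstar, hLip, hmin⟩ := Stmt9Aux.exists_min_lip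
    (fun a : {x // x ∈ G} => f a.1) (fun a b => qm d l u a.1 b.1)
    (fun a => g0 a.1) hh0
  set hfull : (Fin d → ℕ) → ℝ := fun x => if hx : x ∈ G then hstar ⟨x, hx⟩ else 0 with hfulldef
  have hf_eq : ∀ (x : Fin d → ℕ) (hx : x ∈ G), hfull x = hstar ⟨x, hx⟩ :=
    fun x hx => dif_pos hx
  have hfull_lip : ∀ x y, inGrid n d x → inGrid n d y → hfull x - hfull y ≤ qm d l u x y := by
    intro x y hx hy
    rw [hf_eq x ((mem_grid x).mpr hx), hf_eq y ((mem_grid y).mpr hy)]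
    exact hLip _ _
  have hn1 : 1 ≤ n := by omega
  have hgstar : memP n d l u (fun x => hfull (Stmt9Aux.clamp n d x)) :=
    Stmt9Aux.ext_memP n d hn1 l u hfull hfull_lip
  have hgstar_eq : ∀ a : {x // x ∈ G}, hfull (Stmt9Aux.clamp n d a.1) = hstar a := by
    intro a
    rw [Stmt9Aux.clamp_eq n d a.1 ((mem_grid _).mp a.2), hf_eq a.1 a.2]
  have hastar_eq : ∑ x ∈ G, |f x - hfull (Stmt9Aux.clamp n d x)|
      = ∑ a : {x // x ∈ G}, |f a.1 - hstar a| := by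
    rw [← Finset.sum_attach G (fun x => |f x - hfull (Stmt9Aux.clamp n d x)|),
      Finset.univ_eq_attach]
    apply Finset.sum_congr rfl
    intro a _
    rw [hgstar_eq a]
  have tri : ∀ a b c : {x // x ∈ G},
      qm d l u a.1 c.1 ≤ qm d l u a.1 b.1 + qm d l u b.1 c.1 :=
    fun a b c => Stmt9Aux.qm_triangle n d l u hlu' a.1 b.1 c.1
      ((mem_grid _).mp a.2) ((mem_grid _).mp b.2) ((mem_grid _).mp c.2)
  obtain ⟨MV, hMV1, hMV2, hMVsum⟩ := Stmt9Aux.abstract_duality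
    (fun a b : {x // x ∈ G} => qm d l u a.1 b.1) (fun a => f a.1) hstar tri hLip hmin
  set M : Finset ((Fin d → ℕ) × (Fin d → ℕ)) := MV.image (fun p => (p.1.1, p.2.1)) with hMdef
  have hproj : ∀ p ∈ MV, ∀ q ∈ MV, (p.1.1, p.2.1) = (q.1.1, q.2.1) → p = q := by
    intro p _ q _ h
    obtain ⟨h1, h2⟩ := Prod.ext_iff.mp h
    exact Prod.ext (Subtype.ext h1) (Subtype.ext h2)
  have hsum_img : ∑ p ∈ M, vs d l u f p.1 p.2 = ∑ p ∈ MV, vs d l u f p.1.1 p.2.1 := by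
    rw [hMdef]
    exact Finset.sum_image hproj
  have hMmatch : IsMatching n d l u f M := by
    constructor
    · intro p hp
      rw [hMdef] at hp
      obtain ⟨q, hq, rfl⟩ := Finset.mem_image.mp hp
      obtain ⟨hne, hpos⟩ := hMV1 q hq
      refine ⟨(mem_grid _).mp q.1.2, (mem_grid _).mp q.2.2,
        fun h => hne (Subtype.ext h), ?_⟩
      calc (0:ℝ) < f q.1.1 - f q.2.1 - qm d l u q.1.1 q.2.1 := hpos
        _ ≤ vs d l u f q.1.1 q.2.1 := le_max_left _ _
    · intro p hp p' hp' hne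
      rw [hMdef] at hp hp'
      obtain ⟨q, hq, rfl⟩ := Finset.mem_image.mp hp
      obtain ⟨q', hq', rfl⟩ := Finset.mem_image.mp hp'
      have hqq : q ≠ q' := fun h => hne (by rw [h])
      obtain ⟨e1, e2, e3, e4⟩ := hMV2 q hq q' hq' hqq
      exact ⟨fun h => e1 (Subtype.ext h), fun h => e2 (Subtype.ext h),
        fun h => e3 (Subtype.ext h), fun h => e4 (Subtype.ext h)⟩
  have hab : ∑ x ∈ G, |f x - hfull (Stmt9Aux.clamp n d x)| ≤ ∑ p ∈ M, vs d l u f p.1 p.2 := by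
    rw [hastar_eq, hsum_img]
    calc ∑ a : {x // x ∈ G}, |f a.1 - hstar a|
        ≤ ∑ p ∈ MV, (f p.1.1 - f p.2.1 - qm d l u p.1.1 p.2.1) := hMVsum
      _ ≤ ∑ p ∈ MV, vs d l u f p.1.1 p.2.1 :=
          Finset.sum_le_sum (fun p _ => le_max_left _ _)
  -- conclude
  apply le_antisymm
  · calc sInf {s : ℝ | ∃ g : (Fin d → ℕ) → ℝ, memP n d l u g ∧ s = ∑ x ∈ G, |f x - g x|}
        ≤ ∑ x ∈ G, |f x - hfull (Stmt9Aux.clamp n d x)| :=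
          csInf_le hbddA ⟨fun x => hfull (Stmt9Aux.clamp n d x), hgstar, rfl⟩
      _ ≤ ∑ p ∈ M, vs d l u f p.1 p.2 := hab
      _ ≤ sSup {s : ℝ | ∃ M : Finset ((Fin d → ℕ) × (Fin d → ℕ)),
            IsMatching n d l u f M ∧ s = ∑ p ∈ M, vs d l u f p.1 p.2} :=
          le_csSup hbddB ⟨M, hMmatch, rfl⟩
  · apply csSup_le hBne
    intro b hb
    obtain ⟨M', hM', rfl⟩ := hb
    apply le_csInf hAne
    intro a ha
    obtain ⟨g, hg, rfl⟩ := ha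
    exact easy g hg M' hM'
end
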